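/- arXiv:1908.10280 — 5 statements merged into one kernel-verified Lean document; each statement's English description precedes it below -/
import Mathlib

section
/- Let μ ∈ ℂ with μ ≠ 0 and let x be a Floquet solution of the delay system with multiplier μ. Define q = (q_1, …, q_N) : [0,1] → (ℂ^d)^N by q_n(s) = x((s + n − 1)Δ) for n = 1, …, N. Then q'(s) = A(s, μ) q(s) for all s ∈ [0,1] and q(1) = B(μ) q(0); in particular, the vector v = (v_1, …, v_N) with v_n = x((n − 1)Δ) satisfies N(μ)v = 0, i.e., every solution q of q'(s) = A(s, μ)q(s) on [0,1] with q(0) = v satisfies q(1) = B(μ)v. (Forward direction of Theorem 2.2: an eigenpair of the monodromy operator yields an eigenpair of the finite-dimensional nonlinear eigenvalue problem.) -/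
open scoped BigOperators

noncomputable section

/-- `aExp N k = ⌊(k-1)/N⌋` (floor division). -/
def aExp (N : ℕ) (k : ℤ) : ℤ := Int.fdiv (k - 1) (N : ℤ)

/-- `bIdx N hN k` is the `Fin N` index (zero-based) corresponding to the
paper index `b_k = ((k-1) mod N) + 1 ∈ {1,…,N}`. -/
def bIdx (N : ℕ) (hN : 0 < N) (k : ℤ) : Fin N :=
  ⟨((k - 1) % (N : ℤ)).toNat, by
    have hN' : (0:ℤ) < (N:ℤ) := by exact_mod_cast hN
    have h1 : 0 ≤ (k - 1) % (N : ℤ) := Int.emod_nonneg _ (ne_of_gt hN')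
    have h2 : (k - 1) % (N : ℤ) < (N : ℤ) := Int.emod_lt_of_pos _ hN'
    omega⟩

/-- The block linear map `A(s,μ)` acting on `(ℂ^d)^N`:
`(A(s,μ)q)_n = Δ Σ_j A_j((s+n-1)Δ) μ^{a_{n-n_j}} q_{b_{n-n_j}}` (paper indices `n = 1,…,N`). -/
def Aop (d h N : ℕ) (hN : 0 < N) (Δ : ℝ)
    (A : Fin (h+1) → ℝ → Matrix (Fin d) (Fin d) ℝ) (nn : Fin (h+1) → ℕ)
    (s : ℝ) (μ : ℂ) (q : Fin N → Fin d → ℂ) : Fin N → Fin d → ℂ :=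
  fun n i => (Δ : ℂ) * ∑ j : Fin (h+1),
    μ ^ aExp N (((n : ℕ) : ℤ) + 1 - (nn j : ℤ)) *
      ∑ i' : Fin d, ((A j ((s + ((n : ℕ) : ℝ)) * Δ)) i i' : ℂ) *
        q (bIdx N hN (((n : ℕ) : ℤ) + 1 - (nn j : ℤ))) i'

/-- The linear map `B(μ)` on `(ℂ^d)^N`:
`(B(μ)q)_n = q_{n+1}` for `n = 1,…,N-1` and `(B(μ)q)_N = μ q_1`. -/
def Bop (d N : ℕ) (hN : 0 < N) (μ : ℂ) (q : Fin N → Fin d → ℂ) : Fin N → Fin d → ℂ :=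
  fun n i => if hn : (n : ℕ) + 1 < N then q ⟨(n : ℕ) + 1, hn⟩ i else μ * q ⟨0, hN⟩ i

lemma floquet_iterate {d : ℕ} {T : ℝ} {μ : ℂ} (hμ : μ ≠ 0) {x : ℝ → Fin d → ℂ}
    (hT : ∀ t : ℝ, x (t + T) = fun i => μ * x t i) :
    ∀ (m : ℤ) (t : ℝ) (i : Fin d), x (t + (m : ℝ) * T) i = μ ^ m * x t i := by
  intro m
  induction m using Int.induction_on with
  | zero => intro t i; simp
  | succ m ih =>
      intro t i
      have harg : t + (((m : ℤ) + 1 : ℤ) : ℝ) * T = (t + (m : ℝ) * T) + T := by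
        push_cast; ring
      rw [harg, congrFun (hT (t + (m : ℝ) * T)) i]
      have := ih t i
      push_cast at this ⊢
      rw [this]
      rw [zpow_add_one₀ hμ]
      ring
  | pred m ih =>
      intro t i
      have harg : t + ((-(m : ℤ) - 1 : ℤ) : ℝ) * T + T = t + ((-(m : ℤ) : ℤ) : ℝ) * T := by
        push_cast; ring
      have h1 := congrFun (hT (t + ((-(m : ℤ) - 1 : ℤ) : ℝ) * T)) i
      rw [harg] at h1
      have h2 := ih t i
      push_cast at h1 h2 ⊢
      rw [h2] at h1
      have hx2 : x (t + (-(m : ℝ) - 1) * T) i = μ⁻¹ * (μ ^ (-(m:ℤ)) * x t i) := by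
        rw [h1, ← mul_assoc, inv_mul_cancel₀ hμ, one_mul]
      rw [hx2, zpow_sub_one₀ hμ]
      ring

lemma shift_eq {d N : ℕ} (hN : 0 < N) {Δ : ℝ} {μ : ℂ} (hμ : μ ≠ 0) {x : ℝ → Fin d → ℂ}
    (hT : ∀ t : ℝ, x (t + (N : ℝ) * Δ) = fun i => μ * x t i)
    (k : ℤ) (t : ℝ) (i : Fin d) :
    x (t + (k : ℝ) * Δ) i
      = μ ^ (Int.fdiv k (N : ℤ)) * x (t + (((k % (N : ℤ)).toNat : ℕ) : ℝ) * Δ) i := by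
  have hNne : ((N : ℤ)) ≠ 0 := by exact_mod_cast hN.ne'
  have hfd : Int.fdiv k (N : ℤ) = k / (N : ℤ) := Int.fdiv_eq_ediv_of_nonneg k (by positivity)
  have hdm : (N : ℤ) * (k / (N : ℤ)) + k % (N : ℤ) = k := Int.mul_ediv_add_emod k N
  have hmodnn : 0 ≤ k % (N : ℤ) := Int.emod_nonneg k hNne
  have hk : (k : ℝ) = (N : ℝ) * ((k / (N : ℤ) : ℤ) : ℝ) + (((k % (N : ℤ)).toNat : ℕ) : ℝ) := by
    rw [show (((k % (N : ℤ)).toNat : ℕ) : ℝ) = ((k % (N : ℤ) : ℤ) : ℝ) by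
      exact_mod_cast congrArg (Int.cast : ℤ → ℝ) (Int.toNat_of_nonneg hmodnn)]
    exact_mod_cast (congrArg (Int.cast : ℤ → ℝ) hdm).symm
  have harg : t + (k : ℝ) * Δ
      = (t + (((k % (N : ℤ)).toNat : ℕ) : ℝ) * Δ) + ((k / (N : ℤ) : ℤ) : ℝ) * ((N : ℝ) * Δ) := by
    rw [hk]; ring
  rw [harg, floquet_iterate hμ hT, hfd]

lemma Aop_sub (d h N : ℕ) (hN : 0 < N) (Δ : ℝ)
    (A : Fin (h+1) → ℝ → Matrix (Fin d) (Fin d) ℝ) (nn : Fin (h+1) → ℕ)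
    (s : ℝ) (μ : ℂ) (q₁ q₂ : Fin N → Fin d → ℂ) :
    Aop d h N hN Δ A nn s μ q₁ - Aop d h N hN Δ A nn s μ q₂
      = Aop d h N hN Δ A nn s μ (q₁ - q₂) := by
  funext n i
  simp only [Aop, Pi.sub_apply]
  rw [← mul_sub, ← Finset.sum_sub_distrib]
  congr 1
  refine Finset.sum_congr rfl fun j _ => ?_
  rw [← mul_sub, ← Finset.sum_sub_distrib]
  congr 1
  refine Finset.sum_congr rfl fun i' _ => ?_
  ring

lemma Aop_bound (d h N : ℕ) (hN : 0 < N) (Δ : ℝ) (hΔ : 0 < Δ)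
    (A : Fin (h+1) → ℝ → Matrix (Fin d) (Fin d) ℝ) (hA : ∀ j, Continuous (A j))
    (nn : Fin (h+1) → ℕ) (μ : ℂ) :
    ∃ K : ℝ, 0 ≤ K ∧ ∀ s ∈ Set.Icc (0:ℝ) 1, ∀ q : Fin N → Fin d → ℂ,
      ‖Aop d h N hN Δ A nn s μ q‖ ≤ K * ‖q‖ := by
  set g : ℝ → ℝ := fun t => ∑ j : Fin (h+1), ∑ i : Fin d, ∑ i' : Fin d, |A j t i i'| with hg
  have hgc : Continuous g := by
    apply continuous_finset_sum
    intro j _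
    apply continuous_finset_sum
    intro i _
    apply continuous_finset_sum
    intro i' _
    exact ((continuous_apply i').comp ((continuous_apply i).comp (hA j))).abs
  obtain ⟨C, hC⟩ := (isCompact_Icc (a := (0:ℝ)) (b := (N:ℝ)*Δ)).exists_bound_of_continuousOn
    hgc.continuousOn
  have hNΔ : (0:ℝ) ≤ (N:ℝ) * Δ := by positivity
  have hC0 : 0 ≤ C := le_trans (norm_nonneg _) (hC 0 ⟨le_refl _, hNΔ⟩)
  have hAent : ∀ (j : Fin (h+1)) (t : ℝ), t ∈ Set.Icc (0:ℝ) ((N:ℝ)*Δ) →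
      ∀ i i' : Fin d, |A j t i i'| ≤ C := by
    intro j t ht i i'
    have h1 : |A j t i i'| ≤ g t := by
      calc |A j t i i'| ≤ ∑ i'' : Fin d, |A j t i i''| :=
            Finset.single_le_sum (f := fun i'' : Fin d => |A j t i i''|)
              (fun _ _ => abs_nonneg _) (Finset.mem_univ i')
        _ ≤ ∑ i0 : Fin d, ∑ i'' : Fin d, |A j t i0 i''| :=
            Finset.single_le_sum
              (f := fun i0 : Fin d => ∑ i'' : Fin d, |A j t i0 i''|)
              (fun _ _ => Finset.sum_nonneg fun _ _ => abs_nonneg _) (Finset.mem_univ i)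
        _ ≤ g t := Finset.single_le_sum
              (f := fun j' : Fin (h+1) => ∑ i0 : Fin d, ∑ i'' : Fin d, |A j' t i0 i''|)
              (fun _ _ => Finset.sum_nonneg fun _ _ => Finset.sum_nonneg fun _ _ => abs_nonneg _)
              (Finset.mem_univ j)
    exact h1.trans ((le_abs_self _).trans (hC t ht))
  set S : ℝ := ∑ n : Fin N, ∑ j : Fin (h+1), ‖μ ^ aExp N (((n : ℕ) : ℤ) + 1 - (nn j : ℤ))‖
    with hS
  have hS0 : 0 ≤ S :=
    Finset.sum_nonneg fun _ _ => Finset.sum_nonneg fun _ _ => norm_nonneg _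
  refine ⟨Δ * S * ((d : ℝ) * C), by positivity, fun s hs q => ?_⟩
  have hqn : (0:ℝ) ≤ Δ * S * ((d : ℝ) * C) * ‖q‖ := by positivity
  rw [pi_norm_le_iff_of_nonneg hqn]
  intro n
  rw [pi_norm_le_iff_of_nonneg hqn]
  intro i
  have hmem : (s + ((n : ℕ) : ℝ)) * Δ ∈ Set.Icc (0:ℝ) ((N:ℝ)*Δ) := by
    have h0s := hs.1
    have h1s := hs.2
    have hnN : ((n : ℕ) : ℝ) + 1 ≤ (N : ℝ) := by exact_mod_cast n.is_lt
    have hn0 : (0:ℝ) ≤ ((n : ℕ) : ℝ) := Nat.cast_nonneg _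
    constructor
    · have hsn : (0:ℝ) ≤ s + ((n : ℕ) : ℝ) := by linarith
      positivity
    · have h1 : s + ((n : ℕ) : ℝ) ≤ (N : ℝ) := by linarith
      exact mul_le_mul_of_nonneg_right h1 hΔ.le
  have hq : ∀ (m : Fin N) (i' : Fin d), ‖q m i'‖ ≤ ‖q‖ :=
    fun m i' => (norm_le_pi_norm (q m) i').trans (norm_le_pi_norm q m)
  have hentry : ∀ j : Fin (h+1),
      ‖∑ i' : Fin d, ((A j ((s + ((n : ℕ) : ℝ)) * Δ)) i i' : ℂ) *
        q (bIdx N hN (((n : ℕ) : ℤ) + 1 - (nn j : ℤ))) i'‖ ≤ (d : ℝ) * (C * ‖q‖) := by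
    intro j
    refine (norm_sum_le _ _).trans ?_
    have hterm : ∀ i' ∈ Finset.univ (α := Fin d),
        ‖((A j ((s + ((n : ℕ) : ℝ)) * Δ)) i i' : ℂ) *
          q (bIdx N hN (((n : ℕ) : ℤ) + 1 - (nn j : ℤ))) i'‖ ≤ C * ‖q‖ := by
      intro i' _
      rw [norm_mul]
      have h1 : ‖(((A j ((s + ((n : ℕ) : ℝ)) * Δ)) i i' : ℝ) : ℂ)‖ ≤ C := by
        rw [Complex.norm_real, Real.norm_eq_abs]
        exact hAent j _ hmem i i'
      exact mul_le_mul h1 (hq _ i') (norm_nonneg _) hC0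
    refine (Finset.sum_le_sum hterm).trans ?_
    simp [Finset.sum_const, Finset.card_univ, Fintype.card_fin, nsmul_eq_mul]
  have hμn : ∑ j : Fin (h+1), ‖μ ^ aExp N (((n : ℕ) : ℤ) + 1 - (nn j : ℤ))‖ ≤ S :=
    Finset.single_le_sum
      (f := fun n' : Fin N => ∑ j : Fin (h+1), ‖μ ^ aExp N (((n' : ℕ) : ℤ) + 1 - (nn j : ℤ))‖)
      (fun _ _ => Finset.sum_nonneg fun _ _ => norm_nonneg _) (Finset.mem_univ n)
  have hdcq : (0:ℝ) ≤ (d : ℝ) * (C * ‖q‖) := by positivity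
  show ‖Aop d h N hN Δ A nn s μ q n i‖ ≤ Δ * S * ((d : ℝ) * C) * ‖q‖
  simp only [Aop]
  rw [norm_mul, Complex.norm_real, Real.norm_eq_abs, abs_of_pos hΔ]
  have hsum : ‖∑ j : Fin (h+1), μ ^ aExp N (((n : ℕ) : ℤ) + 1 - (nn j : ℤ)) *
      ∑ i' : Fin d, ((A j ((s + ((n : ℕ) : ℝ)) * Δ)) i i' : ℂ) *
        q (bIdx N hN (((n : ℕ) : ℤ) + 1 - (nn j : ℤ))) i'‖
      ≤ S * ((d : ℝ) * (C * ‖q‖)) := by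
    refine (norm_sum_le _ _).trans ?_
    have hper2 : ∀ j ∈ Finset.univ (α := Fin (h+1)),
        ‖μ ^ aExp N (((n : ℕ) : ℤ) + 1 - (nn j : ℤ)) *
          ∑ i' : Fin d, ((A j ((s + ((n : ℕ) : ℝ)) * Δ)) i i' : ℂ) *
            q (bIdx N hN (((n : ℕ) : ℤ) + 1 - (nn j : ℤ))) i'‖
          ≤ ‖μ ^ aExp N (((n : ℕ) : ℤ) + 1 - (nn j : ℤ))‖ * ((d : ℝ) * (C * ‖q‖)) := by
      intro j _
      rw [norm_mul]
      exact mul_le_mul_of_nonneg_left (hentry j) (norm_nonneg _)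
    refine (Finset.sum_le_sum hper2).trans ?_
    rw [← Finset.sum_mul]
    exact mul_le_mul_of_nonneg_right hμn hdcq
  calc Δ * ‖∑ j : Fin (h+1), μ ^ aExp N (((n : ℕ) : ℤ) + 1 - (nn j : ℤ)) *
      ∑ i' : Fin d, ((A j ((s + ((n : ℕ) : ℝ)) * Δ)) i i' : ℂ) *
        q (bIdx N hN (((n : ℕ) : ℤ) + 1 - (nn j : ℤ))) i'‖
      ≤ Δ * (S * ((d : ℝ) * (C * ‖q‖))) := mul_le_mul_of_nonneg_left hsum hΔ.le
    _ = Δ * S * ((d : ℝ) * C) * ‖q‖ := by ring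

/-- A Floquet solution of `x'(t) = Σ_j A_j(t) x(t - n_j Δ)` with multiplier `μ`:
a not-identically-zero differentiable `x : ℝ → ℂ^d` satisfying the delay equation
everywhere together with `x(t+T) = μ x(t)`. -/
def IsFloquetSolution (d h : ℕ) (A : Fin (h+1) → ℝ → Matrix (Fin d) (Fin d) ℝ)
    (nn : Fin (h+1) → ℕ) (Δ T : ℝ) (μ : ℂ) (x : ℝ → Fin d → ℂ) : Prop :=
  (∃ t, x t ≠ 0) ∧
  (∀ t : ℝ, HasDerivAt x (fun i => ∑ j : Fin (h+1), ∑ i' : Fin d,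
      ((A j t) i i' : ℂ) * x (t - (nn j : ℝ) * Δ) i') t) ∧
  (∀ t : ℝ, x (t + T) = fun i => μ * x t i)

/-- **Theorem 2.2, forward direction.** If `x` is a Floquet solution with multiplier
`μ ≠ 0`, then `q_n(s) = x((s+n-1)Δ)` solves `q' = A(s,μ)q` on `[0,1]` with
`q(1) = B(μ) q(0)`; in particular `v_n = x((n-1)Δ)` satisfies `N(μ)v = 0`, i.e. every
solution `Q` of the initial value problem `Q' = A(s,μ)Q`, `Q(0) = v` satisfies
`Q(1) = B(μ)v`. -/
theorem eigenpair_to_nleig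
    (d h N : ℕ) (hd : 0 < d) (hN : 0 < N) (Δ : ℝ) (hΔ : 0 < Δ)
    (A : Fin (h+1) → ℝ → Matrix (Fin d) (Fin d) ℝ)
    (hA : ∀ j, Continuous (A j))
    (hper : ∀ j t, A j (t + (N : ℝ) * Δ) = A j t)
    (nn : Fin (h+1) → ℕ) (hn0 : nn 0 = 0)
    (hmono : ∀ i j : Fin (h+1), 1 ≤ (i : ℕ) → i < j → nn i < nn j)
    (μ : ℂ) (hμ : μ ≠ 0)
    (x : ℝ → Fin d → ℂ)
    (hx : IsFloquetSolution d h A nn Δ ((N : ℝ) * Δ) μ x) :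
    (∀ s ∈ Set.Icc (0:ℝ) 1,
      HasDerivAt (fun s : ℝ => fun (n : Fin N) (i : Fin d) => x ((s + ((n : ℕ) : ℝ)) * Δ) i)
        (Aop d h N hN Δ A nn s μ (fun n i => x ((s + ((n : ℕ) : ℝ)) * Δ) i)) s) ∧
    ((fun (n : Fin N) (i : Fin d) => x ((1 + ((n : ℕ) : ℝ)) * Δ) i)
      = Bop d N hN μ (fun n i => x ((((n : ℕ) : ℝ)) * Δ) i)) ∧
    (∀ Q : ℝ → Fin N → Fin d → ℂ,
      Q 0 = (fun (n : Fin N) (i : Fin d) => x ((((n : ℕ) : ℝ)) * Δ) i) →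
      (∀ s ∈ Set.Icc (0:ℝ) 1, HasDerivAt Q (Aop d h N hN Δ A nn s μ (Q s)) s) →
      Q 1 = Bop d N hN μ (fun (n : Fin N) (i : Fin d) => x ((((n : ℕ) : ℝ)) * Δ) i)) := by
  obtain ⟨-, hderiv, hflo⟩ := hx
  have part1 : ∀ s : ℝ,
      HasDerivAt (fun s : ℝ => fun (n : Fin N) (i : Fin d) => x ((s + ((n : ℕ) : ℝ)) * Δ) i)
        (Aop d h N hN Δ A nn s μ (fun n i => x ((s + ((n : ℕ) : ℝ)) * Δ) i)) s := by
    intro s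
    rw [hasDerivAt_pi]
    intro n
    rw [hasDerivAt_pi]
    intro i
    have hg : HasDerivAt (fun s : ℝ => (s + ((n : ℕ) : ℝ)) * Δ) Δ s := by
      simpa using ((hasDerivAt_id s).add_const ((n : ℕ) : ℝ)).mul_const Δ
    have hxd := hderiv ((s + ((n : ℕ) : ℝ)) * Δ)
    have hxi := (hasDerivAt_pi.mp hxd) i
    have hcomp := HasDerivAt.scomp s hxi hg
    have hcomp' : HasDerivAt (fun s : ℝ => x ((s + ((n : ℕ) : ℝ)) * Δ) i)
        (Δ • ∑ j : Fin (h+1), ∑ i' : Fin d,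
          ((A j ((s + ((n : ℕ) : ℝ)) * Δ)) i i' : ℂ) *
            x ((s + ((n : ℕ) : ℝ)) * Δ - (nn j : ℝ) * Δ) i') s := hcomp
    convert hcomp' using 1
    · rfl
    simp only [Aop]
    rw [Complex.real_smul]
    congr 1
    refine Finset.sum_congr rfl fun j _ => ?_
    rw [Finset.mul_sum]
    refine Finset.sum_congr rfl fun i' _ => ?_
    have hk : (s + ((n : ℕ) : ℝ)) * Δ - ((nn j : ℕ) : ℝ) * Δ
        = s * Δ + ((((n : ℕ) : ℤ) - ((nn j : ℕ) : ℤ) : ℤ) : ℝ) * Δ := by push_cast; ring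
    have ha : aExp N (((n : ℕ) : ℤ) + 1 - (nn j : ℤ))
        = Int.fdiv (((n : ℕ) : ℤ) - ((nn j : ℕ) : ℤ)) (N : ℤ) := by
      simp only [aExp]; congr 1; ring
    have hb : ((bIdx N hN (((n : ℕ) : ℤ) + 1 - (nn j : ℤ)) : Fin N) : ℕ)
        = (((((n : ℕ) : ℤ) - ((nn j : ℕ) : ℤ)) % (N : ℤ)).toNat) := by
      simp only [bIdx]
      congr 2
      ring
    have hbr : (s + ((bIdx N hN (((n : ℕ) : ℤ) + 1 - (nn j : ℤ)) : ℕ) : ℝ)) * Δ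
        = s * Δ + ((((((n : ℕ) : ℤ) - ((nn j : ℕ) : ℤ)) % (N : ℤ)).toNat : ℕ) : ℝ) * Δ := by
      rw [hb]; ring
    rw [hk, shift_eq hN hμ hflo ((((n : ℕ) : ℤ) - ((nn j : ℕ) : ℤ))) (s * Δ) i', ha, hbr]
    ring
  have part2 : (fun (n : Fin N) (i : Fin d) => x ((1 + ((n : ℕ) : ℝ)) * Δ) i)
      = Bop d N hN μ (fun n i => x ((((n : ℕ) : ℝ)) * Δ) i) := by
    funext n i
    simp only [Bop]
    split_ifs with hn
    · have harg : (1 + ((n : ℕ) : ℝ)) = ((((n : ℕ) + 1 : ℕ)) : ℝ) := by push_cast; ring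
      rw [harg]
    · have hnN : (n : ℕ) + 1 = N := by
        have := n.is_lt; omega
      have h1 : (1 + ((n : ℕ) : ℝ)) * Δ = 0 + (N : ℝ) * Δ := by
        have hc : ((N : ℕ) : ℝ) = ((n : ℕ) : ℝ) + 1 := by exact_mod_cast hnN.symm
        rw [hc]; ring
      rw [h1, congrFun (hflo 0) i]
      norm_num
  refine ⟨fun s _ => part1 s, part2, ?_⟩
  intro Q hQ0 hQd
  obtain ⟨K, hK0, hKb⟩ := Aop_bound d h N hN Δ hΔ A hA nn μ
  set F : ℝ → Fin N → Fin d → ℂ :=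
    fun s => fun n i => x ((s + ((n : ℕ) : ℝ)) * Δ) i with hF
  set v : ℝ → (Fin N → Fin d → ℂ) → (Fin N → Fin d → ℂ) :=
    fun t => Aop d h N hN Δ A nn (min (max t 0) 1) μ with hv
  have hvt : ∀ t ∈ Set.Icc (0:ℝ) 1, v t = Aop d h N hN Δ A nn t μ := by
    intro t ht
    simp only [hv, max_eq_left ht.1, min_eq_left ht.2]
  have hlip : ∀ t, LipschitzWith (Real.toNNReal K) (v t) := by
    intro t
    apply LipschitzWith.of_dist_le_mul
    intro q₁ q₂
    have hmm : min (max t 0) 1 ∈ Set.Icc (0:ℝ) 1 :=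
      ⟨le_min (le_max_right t 0) zero_le_one, min_le_right _ _⟩
    rw [dist_eq_norm, dist_eq_norm]
    simp only [hv]
    rw [Aop_sub]
    calc ‖Aop d h N hN Δ A nn (min (max t 0) 1) μ (q₁ - q₂)‖
        ≤ K * ‖q₁ - q₂‖ := hKb _ hmm _
      _ = (Real.toNNReal K : ℝ) * ‖q₁ - q₂‖ := by rw [Real.coe_toNNReal K hK0]
  have hQc : ContinuousOn Q (Set.Icc 0 1) :=
    fun t ht => (hQd t ht).continuousAt.continuousWithinAt
  have hFc : ContinuousOn F (Set.Icc 0 1) :=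
    fun t _ => (part1 t).continuousAt.continuousWithinAt
  have hQ' : ∀ t ∈ Set.Ico (0:ℝ) 1, HasDerivWithinAt Q (v t (Q t)) (Set.Ici t) t := by
    intro t ht
    have htI : t ∈ Set.Icc (0:ℝ) 1 := Set.Ico_subset_Icc_self ht
    rw [hvt t htI]
    exact (hQd t htI).hasDerivWithinAt
  have hF' : ∀ t ∈ Set.Ico (0:ℝ) 1, HasDerivWithinAt F (v t (F t)) (Set.Ici t) t := by
    intro t ht
    have htI : t ∈ Set.Icc (0:ℝ) 1 := Set.Ico_subset_Icc_self ht
    rw [hvt t htI]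
    exact (part1 t).hasDerivWithinAt
  have h0 : Q 0 = F 0 := by
    rw [hQ0]
    funext n i
    simp [hF]
  have heq := ODE_solution_unique hlip hQc hQ' hFc hF' h0
  have h1 : Q 1 = F 1 := heq ⟨zero_le_one, le_refl 1⟩
  rw [h1, ← part2]
end
end

section
/- Let μ ∈ ℂ with μ ≠ 0 and let q = (q_1, …, q_N) : [0,1] → (ℂ^d)^N be differentiable with q'(s) = A(s, μ) q(s) for all s ∈ [0,1], q(1) = B(μ) q(0), and q(0) ≠ 0. Define x : ℝ → ℂ^d by x(t) = μ^{⌊(n−1)/N⌋} q_{((n−1) mod N) + 1}(t/Δ − (n − 1)) for t ∈ ((n − 1)Δ, nΔ] and every n ∈ ℤ (μ raised to a possibly negative integer power). Then x is a Floquet solution of the delay system with multiplier μ; in particular μ is a Floquet multiplier. (Backward direction of Lemma 2.1 / Theorem 2.2: a solution of the boundary value problem yields an eigenfunction of the monodromy operator.) -/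
open scoped BigOperators

noncomputable section

/- ### Auxiliary lemmas -/

lemma bIdx_coe (N : ℕ) (hN : 0 < N) (k : ℤ) : ((bIdx N hN k : ℕ) : ℤ) = (k - 1) % N := by
  have hN' : (0:ℤ) < (N:ℤ) := by exact_mod_cast hN
  simp [bIdx, Int.toNat_of_nonneg (Int.emod_nonneg _ (ne_of_gt hN'))]

lemma aExp_split (N : ℕ) (hN : 0 < N) (k m : ℤ) :
    aExp N k + aExp N ((k - 1) % N + 1 - m) = aExp N (k - m) := by
  have hNz : ((N:ℤ)) ≠ 0 := by exact_mod_cast hN.ne'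
  have hNn : (0:ℤ) ≤ (N:ℤ) := by positivity
  unfold aExp
  rw [Int.fdiv_eq_ediv_of_nonneg _ hNn, Int.fdiv_eq_ediv_of_nonneg _ hNn, Int.fdiv_eq_ediv_of_nonneg _ hNn]
  have h : k - m - 1 = ((k - 1) % N + 1 - m - 1) + (N:ℤ) * ((k-1) / N) := by
    have := Int.mul_ediv_add_emod (k-1) N
    linarith
  rw [h, Int.add_mul_ediv_left _ _ hNz]
  ring

lemma bIdx_split (N : ℕ) (hN : 0 < N) (k m : ℤ) :
    bIdx N hN ((k - 1) % N + 1 - m) = bIdx N hN (k - m) := by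
  have hNz : ((N:ℤ)) ≠ 0 := by exact_mod_cast hN.ne'
  apply Fin.ext
  show (((k - 1) % N + 1 - m - 1) % N).toNat = ((k - m - 1) % N).toNat
  congr 1
  have h : k - m - 1 = ((k - 1) % N + 1 - m - 1) + (N:ℤ) * ((k-1) / N) := by
    have := Int.mul_ediv_add_emod (k-1) N
    linarith
  rw [h, Int.add_mul_emod_self_left]

lemma aExp_addN (N : ℕ) (hN : 0 < N) (k : ℤ) : aExp N (k + N) = aExp N k + 1 := by
  have hNz : ((N:ℤ)) ≠ 0 := by exact_mod_cast hN.ne'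
  have hNn : (0:ℤ) ≤ (N:ℤ) := by positivity
  unfold aExp
  rw [Int.fdiv_eq_ediv_of_nonneg _ hNn, Int.fdiv_eq_ediv_of_nonneg _ hNn]
  have h : k + N - 1 = (k - 1) + (N:ℤ) * 1 := by ring
  rw [h, Int.add_mul_ediv_left _ _ hNz]

lemma bIdx_addN (N : ℕ) (hN : 0 < N) (k : ℤ) : bIdx N hN (k + N) = bIdx N hN k := by
  apply Fin.ext
  show ((k + N - 1) % N).toNat = ((k - 1) % N).toNat
  congr 1
  have h : k + N - 1 = (k - 1) + (N:ℤ) * 1 := by ring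
  rw [h, Int.add_mul_emod_self_left]

lemma consistency (d N : ℕ) (hN : 0 < N) (μ : ℂ) (hμ : μ ≠ 0)
    (q0 : Fin N → Fin d → ℂ) (k : ℤ) (i : Fin d) :
    μ ^ aExp N (k + 1) * q0 (bIdx N hN (k + 1)) i
      = μ ^ aExp N k * Bop d N hN μ q0 (bIdx N hN k) i := by
  have hN' : (0:ℤ) < (N:ℤ) := by exact_mod_cast hN
  have hNz : ((N:ℤ)) ≠ 0 := ne_of_gt hN'
  have hNn : (0:ℤ) ≤ (N:ℤ) := le_of_lt hN'
  set r : ℤ := (k - 1) % N with hr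
  have hr0 : 0 ≤ r := Int.emod_nonneg _ hNz
  have hrN : r < N := Int.emod_lt_of_pos _ hN'
  have hdecomp : k - 1 = (N:ℤ) * ((k-1)/N) + r := (Int.mul_ediv_add_emod (k-1) N).symm
  have hbk : (bIdx N hN k : ℕ) = r.toNat := rfl
  have hk1 : k + 1 - 1 = (r + 1) + (N:ℤ) * ((k-1)/N) := by linarith
  have haek : aExp N k = (k-1)/N := Int.fdiv_eq_ediv_of_nonneg _ hNn
  have hae : aExp N (k+1) = (r+1)/N + (k-1)/N := by
    unfold aExp; rw [Int.fdiv_eq_ediv_of_nonneg _ hNn, hk1, Int.add_mul_ediv_left _ _ hNz]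
  have hbe : ((bIdx N hN (k+1) : ℕ) : ℤ) = (r + 1) % N := by
    show (((k + 1 - 1) % N).toNat : ℤ) = _
    rw [hk1, Int.add_mul_emod_self_left]
    exact Int.toNat_of_nonneg (Int.emod_nonneg _ hNz)
  unfold Bop
  by_cases hcase : (bIdx N hN k : ℕ) + 1 < N
  · rw [dif_pos hcase]
    have hrlt : r + 1 < N := by
      have h1 : (r.toNat : ℤ) = r := Int.toNat_of_nonneg hr0
      omega
    have h1 : aExp N (k+1) = aExp N k := by
      rw [hae, haek, Int.ediv_eq_zero_of_lt (by linarith) hrlt]; ring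
    have h2 : bIdx N hN (k+1) = ⟨(bIdx N hN k : ℕ) + 1, hcase⟩ := by
      apply Fin.ext
      simp only [Fin.val_mk]
      have h3 : ((bIdx N hN (k+1) : ℕ) : ℤ) = r + 1 := by
        rw [hbe, Int.emod_eq_of_lt (by linarith) hrlt]
      have h1 : (r.toNat : ℤ) = r := Int.toNat_of_nonneg hr0
      omega
    rw [h1, h2]
  · rw [dif_neg hcase]
    have hrlt : r + 1 = N := by
      have h1 : (r.toNat : ℤ) = r := Int.toNat_of_nonneg hr0
      omega
    have h1 : aExp N (k+1) = aExp N k + 1 := by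
      rw [hae, haek, hrlt, Int.ediv_self hNz]; ring
    have h2 : bIdx N hN (k+1) = ⟨0, hN⟩ := by
      apply Fin.ext
      simp only [Fin.val_mk]
      have h3 : ((bIdx N hN (k+1) : ℕ) : ℤ) = 0 := by
        rw [hbe, hrlt, Int.emod_self]
      omega
    rw [h1, h2, zpow_add_one₀ hμ]
    ring

lemma eq_lemma (d h N : ℕ) (hN : 0 < N) (Δ : ℝ) (hΔ : 0 < Δ)
    (A : Fin (h+1) → ℝ → Matrix (Fin d) (Fin d) ℝ)
    (hper : ∀ j t, A j (t + (N : ℝ) * Δ) = A j t)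
    (nn : Fin (h+1) → ℕ) (μ : ℂ) (hμ : μ ≠ 0)
    (qs : Fin N → Fin d → ℂ) (s : ℝ) (k : ℤ) (i : Fin d) :
    (Δ : ℂ)⁻¹ * (μ ^ aExp N k * Aop d h N hN Δ A nn s μ qs (bIdx N hN k) i)
      = ∑ j : Fin (h+1), ∑ i' : Fin d, ((A j ((s + (k:ℝ) - 1) * Δ)) i i' : ℂ) *
          (μ ^ aExp N (k - (nn j : ℤ)) * qs (bIdx N hN (k - (nn j : ℤ))) i') := by
  have hΔz : (Δ:ℂ) ≠ 0 := by exact_mod_cast hΔ.ne'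
  unfold Aop
  rw [show (Δ:ℂ)⁻¹ * (μ ^ aExp N k * ((Δ:ℂ) * ∑ j : Fin (h+1),
      μ ^ aExp N (((bIdx N hN k : ℕ) : ℤ) + 1 - (nn j : ℤ)) *
      ∑ i' : Fin d, ((A j ((s + ((bIdx N hN k : ℕ) : ℝ)) * Δ)) i i' : ℂ) *
        qs (bIdx N hN (((bIdx N hN k : ℕ) : ℤ) + 1 - (nn j : ℤ))) i'))
    = ∑ j : Fin (h+1),
      (μ ^ aExp N k * μ ^ aExp N (((bIdx N hN k : ℕ) : ℤ) + 1 - (nn j : ℤ))) *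
      ∑ i' : Fin d, ((A j ((s + ((bIdx N hN k : ℕ) : ℝ)) * Δ)) i i' : ℂ) *
        qs (bIdx N hN (((bIdx N hN k : ℕ) : ℤ) + 1 - (nn j : ℤ))) i' from by
      rw [Finset.mul_sum, Finset.mul_sum, Finset.mul_sum]
      apply Finset.sum_congr rfl
      intro j _
      field_simp]
  apply Finset.sum_congr rfl
  intro j _
  rw [bIdx_coe, ← zpow_add₀ hμ, aExp_split N hN k (nn j), bIdx_split N hN k (nn j)]
  have hA : A j ((s + ((bIdx N hN k : ℕ) : ℝ)) * Δ) = A j ((s + (k:ℝ) - 1) * Δ) := by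
    have hper' : Function.Periodic (A j) ((N:ℝ) * Δ) := hper j
    have h1 := hper'.sub_int_mul_eq (x := (s + (k:ℝ) - 1) * Δ) (aExp N k)
    have hdec : ((bIdx N hN k : ℕ) : ℤ) = (k - 1) - (N:ℤ) * aExp N k := by
      rw [bIdx_coe]
      have h2 : aExp N k = (k-1) / (N:ℤ) := Int.fdiv_eq_ediv_of_nonneg _ (by positivity)
      rw [h2]
      have := Int.mul_ediv_add_emod (k-1) (N:ℤ)
      linarith
    have harg : (s + ((bIdx N hN k : ℕ) : ℝ)) * Δ
        = (s + (k:ℝ) - 1) * Δ - (aExp N k : ℝ) * ((N:ℝ) * Δ) := by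
      have h3 : ((bIdx N hN k : ℕ) : ℝ) = (k:ℝ) - 1 - (N:ℝ) * ((aExp N k : ℤ) : ℝ) := by
        exact_mod_cast congrArg (fun z : ℤ => (z : ℝ)) hdec
      rw [h3]; ring
    rw [harg, h1]
  rw [hA]
  rw [Finset.mul_sum]
  apply Finset.sum_congr rfl
  intro i' _
  ring

/-- **Lemma 2.1 / Theorem 2.2, backward direction.** -/
theorem bvp_to_eigenfunction
    (d h N : ℕ) (hd : 0 < d) (hN : 0 < N) (Δ : ℝ) (hΔ : 0 < Δ)
    (A : Fin (h+1) → ℝ → Matrix (Fin d) (Fin d) ℝ)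
    (hA : ∀ j, Continuous (A j))
    (hper : ∀ j t, A j (t + (N : ℝ) * Δ) = A j t)
    (nn : Fin (h+1) → ℕ) (hn0 : nn 0 = 0)
    (hmono : ∀ i j : Fin (h+1), 1 ≤ (i : ℕ) → i < j → nn i < nn j)
    (μ : ℂ) (hμ : μ ≠ 0)
    (q : ℝ → Fin N → Fin d → ℂ)
    (hq0 : q 0 ≠ 0)
    (hode : ∀ s ∈ Set.Icc (0:ℝ) 1, HasDerivAt q (Aop d h N hN Δ A nn s μ (q s)) s)
    (hbc : q 1 = Bop d N hN μ (q 0)) :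
    IsFloquetSolution d h A nn Δ ((N : ℝ) * Δ) μ
      (fun t i => μ ^ aExp N ⌈t / Δ⌉ *
        q (t / Δ - (((⌈t / Δ⌉ : ℤ) : ℝ) - 1)) (bIdx N hN ⌈t / Δ⌉) i) := by
  have hΔz : Δ ≠ 0 := hΔ.ne'
  have hN' : (0:ℤ) < (N:ℤ) := by exact_mod_cast hN
  refine ⟨?_, ?_, ?_⟩
  · -- nonzero
    have hq1 : q 1 ≠ 0 := by
      intro hzero
      apply hq0
      funext n i
      simp only [Pi.zero_apply]
      have hB : ∀ m : Fin N, Bop d N hN μ (q 0) m i = 0 := by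
        intro m
        rw [← hbc, hzero]
        simp
      by_cases hn : (n : ℕ) = 0
      · have h1 := hB ⟨N - 1, by omega⟩
        unfold Bop at h1
        rw [dif_neg (by simp only [Fin.val_mk]; omega)] at h1
        have h0 : q 0 ⟨0, hN⟩ i = 0 := by
          rcases mul_eq_zero.mp h1 with h' | h'
          · exact absurd h' hμ
          · exact h'
        have : n = ⟨0, hN⟩ := Fin.ext hn
        rw [this]; exact h0
      · have h1 := hB ⟨(n : ℕ) - 1, by omega⟩
        unfold Bop at h1
        rw [dif_pos (by simp only [Fin.val_mk]; omega)] at h1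
        have h2 : (⟨(n:ℕ) - 1 + 1, by omega⟩ : Fin N) = n := Fin.ext (by simp only [Fin.val_mk]; omega)
        rw [h2] at h1
        exact h1
    have hex : ∃ n i, q 1 n i ≠ 0 := by
      by_contra hc
      push_neg at hc
      exact hq1 (by funext n i; simpa using hc n i)
    obtain ⟨n, i, hni⟩ := hex
    refine ⟨(((n:ℕ):ℝ) + 1) * Δ, fun hzero => hni ?_⟩
    have hdiv : ((((n:ℕ):ℝ) + 1) * Δ) / Δ = ((n:ℕ):ℝ) + 1 := by field_simp
    have hceil : ⌈((((n:ℕ):ℝ) + 1) * Δ) / Δ⌉ = ((n:ℕ):ℤ) + 1 := by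
      rw [hdiv]
      rw [show ((n:ℕ):ℝ) + 1 = ((((n:ℕ):ℤ) + 1 : ℤ) : ℝ) by push_cast; ring]
      exact Int.ceil_intCast _
    have ha0 : aExp N (((n:ℕ):ℤ) + 1) = 0 := by
      unfold aExp
      rw [Int.fdiv_eq_ediv_of_nonneg _ (le_of_lt hN')]
      have : ((n:ℕ):ℤ) + 1 - 1 = ((n:ℕ):ℤ) := by ring
      rw [this]
      exact Int.ediv_eq_zero_of_lt (by positivity) (by exact_mod_cast n.isLt)
    have hb0 : bIdx N hN (((n:ℕ):ℤ) + 1) = n := by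
      apply Fin.ext
      have : ((bIdx N hN (((n:ℕ):ℤ) + 1) : ℕ) : ℤ) = (n : ℕ) := by
        rw [bIdx_coe]
        have h1 : ((n:ℕ):ℤ) + 1 - 1 = ((n:ℕ):ℤ) := by ring
        rw [h1]
        exact Int.emod_eq_of_lt (by positivity) (by exact_mod_cast n.isLt)
      exact_mod_cast this
    have harg : ((((n:ℕ):ℝ) + 1) * Δ) / Δ - ((((((n:ℕ):ℤ) + 1 : ℤ)) : ℝ) - 1) = 1 := by
      rw [hdiv]; push_cast; ring
    have hthis := congrFun hzero i
    simp only at hthis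
    rw [hceil, harg, ha0, hb0] at hthis
    simpa using hthis
  · -- derivative
    intro t
    set xf : ℝ → Fin d → ℂ := fun t i => μ ^ aExp N ⌈t / Δ⌉ *
        q (t / Δ - (((⌈t / Δ⌉ : ℤ) : ℝ) - 1)) (bIdx N hN ⌈t / Δ⌉) i with hxf
    set k : ℤ := ⌈t / Δ⌉ with hk
    set s : ℝ := t / Δ - ((k:ℝ) - 1) with hs
    have hsle : s ≤ 1 := by
      have hcl := Int.le_ceil (t / Δ)
      rw [← hk] at hcl
      rw [hs]; linarith
    have hspos : 0 < s := by
      have hcl := Int.ceil_lt_add_one (t / Δ)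
      rw [← hk] at hcl
      rw [hs]; linarith
    have hts : t = (s + (k:ℝ) - 1) * Δ := by
      rw [hs]; field_simp; ring
    -- general derivative of a single piece
    have hg : ∀ (k' : ℤ) (u : ℝ), u / Δ - ((k':ℝ) - 1) ∈ Set.Icc (0:ℝ) 1 →
        HasDerivAt (fun t' => fun i => μ ^ aExp N k' * q (t' / Δ - ((k':ℝ) - 1)) (bIdx N hN k') i)
          (fun i => (Δ:ℂ)⁻¹ * (μ ^ aExp N k' *
            Aop d h N hN Δ A nn (u / Δ - ((k':ℝ) - 1)) μ (q (u / Δ - ((k':ℝ) - 1))) (bIdx N hN k') i)) u := by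
      intro k' u hu
      have hq' := hode _ hu
      have hlin : HasDerivAt (fun t' : ℝ => t' / Δ - ((k':ℝ) - 1)) (1 / Δ) u := by
        simpa using ((hasDerivAt_id u).div_const Δ).sub_const ((k':ℝ) - 1)
      have hcomp := hq'.scomp u hlin
      have hpi := (hasDerivAt_pi.mp hcomp) (bIdx N hN k')
      have hsm := hpi.const_smul (μ ^ aExp N k')
      have e1 : (fun y => μ ^ aExp N k' • (q ∘ fun t'' : ℝ => t'' / Δ - ((k':ℝ) - 1)) y (bIdx N hN k'))
          = (fun t' => fun i => μ ^ aExp N k' * q (t' / Δ - ((k':ℝ) - 1)) (bIdx N hN k') i) := by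
        funext t' i'
        simp [Function.comp]
      have e2 : (μ ^ aExp N k' • ((1 / Δ) • Aop d h N hN Δ A nn (u / Δ - ((k':ℝ) - 1)) μ
            (q (u / Δ - ((k':ℝ) - 1)))) (bIdx N hN k'))
          = (fun i => (Δ:ℂ)⁻¹ * (μ ^ aExp N k' *
            Aop d h N hN Δ A nn (u / Δ - ((k':ℝ) - 1)) μ (q (u / Δ - ((k':ℝ) - 1))) (bIdx N hN k') i)) := by
        funext i'
        simp only [Pi.smul_apply, smul_eq_mul, Complex.real_smul]
        push_cast
        ring
      rw [e2] at hsm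
      refine hsm.congr_of_eventuallyEq (Filter.Eventually.of_forall fun t' => ?_)
      funext i'
      simp [Function.comp]
    -- identify the target derivative value
    have hdivj : ∀ j : Fin (h+1), (t - (nn j:ℝ) * Δ) / Δ = t / Δ - ((nn j : ℕ):ℝ) := by
      intro j; field_simp
    have hceilj : ∀ j : Fin (h+1), ⌈(t - (nn j:ℝ) * Δ) / Δ⌉ = k - (nn j : ℤ) := by
      intro j
      rw [hdivj j, show ((nn j : ℕ):ℝ) = (((nn j:ℕ):ℤ):ℝ) from by push_cast; ring,
        Int.ceil_sub_intCast, ← hk]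
    have hargj : ∀ j : Fin (h+1),
        (t - (nn j:ℝ) * Δ) / Δ - (((k - (nn j:ℤ) : ℤ):ℝ) - 1) = s := by
      intro j; rw [hdivj j, hs]; push_cast; ring
    have hFval : (fun i => ∑ j : Fin (h+1), ∑ i' : Fin d,
          ((A j t) i i' : ℂ) * xf (t - (nn j:ℝ) * Δ) i')
        = (fun i => ∑ j : Fin (h+1), ∑ i' : Fin d, ((A j t) i i' : ℂ) *
            (μ ^ aExp N (k - (nn j:ℤ)) * q s (bIdx N hN (k - (nn j:ℤ))) i')) := by
      funext i
      refine Finset.sum_congr rfl fun j _ => Finset.sum_congr rfl fun i' _ => ?_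
      rw [hxf]
      simp only
      rw [hceilj j, hargj j]
    rw [hFval]
    -- the left-piece derivative value equals the target
    have hDG : (fun i => (Δ:ℂ)⁻¹ * (μ ^ aExp N k *
          Aop d h N hN Δ A nn (t / Δ - ((k:ℝ) - 1)) μ (q (t / Δ - ((k:ℝ) - 1))) (bIdx N hN k) i))
        = (fun i => ∑ j : Fin (h+1), ∑ i' : Fin d, ((A j t) i i' : ℂ) *
            (μ ^ aExp N (k - (nn j:ℤ)) * q s (bIdx N hN (k - (nn j:ℤ))) i')) := by
      funext i
      rw [← hs, eq_lemma d h N hN Δ hΔ A hper nn μ hμ (q s) s k i, ← hts]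
    rcases lt_or_eq_of_le hsle with hslt | hseq
    · -- interior case
      have hmem : t / Δ - ((k:ℝ) - 1) ∈ Set.Icc (0:ℝ) 1 := by
        rw [← hs]; exact ⟨le_of_lt hspos, hsle⟩
      have hDg := hg k t hmem
      have htlo : ((k:ℝ) - 1) * Δ < t := by
        rw [hts]
        have := mul_lt_mul_of_pos_right (show (k:ℝ) - 1 < s + (k:ℝ) - 1 by linarith) hΔ
        linarith
      have hthi : t < (k:ℝ) * Δ := by
        rw [hts]
        have := mul_lt_mul_of_pos_right (show s + (k:ℝ) - 1 < (k:ℝ) by linarith) hΔ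
        linarith
      have hU : Set.Ioo (((k:ℝ) - 1) * Δ) ((k:ℝ) * Δ) ∈ nhds t :=
        isOpen_Ioo.mem_nhds ⟨htlo, hthi⟩
      have hxeq : ∀ t' ∈ Set.Ioo (((k:ℝ) - 1) * Δ) ((k:ℝ) * Δ),
          xf t' = (fun t'' => fun i => μ ^ aExp N k *
            q (t'' / Δ - ((k:ℝ) - 1)) (bIdx N hN k) i) t' := by
        intro t' ht'
        have hc : ⌈t' / Δ⌉ = k := by
          rw [Int.ceil_eq_iff]
          constructor
          · rw [lt_div_iff₀ hΔ]
            exact ht'.1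
          · rw [div_le_iff₀ hΔ]
            exact le_of_lt ht'.2
        funext i
        rw [hxf]
        simp only
        rw [hc]
      have hEq : xf =ᶠ[nhds t] _ := Filter.eventuallyEq_of_mem hU hxeq
      have hD := hDg.congr_of_eventuallyEq hEq
      exact hDG ▸ hD
    · -- boundary case s = 1
      have htk : t / Δ = (k:ℝ) := by
        rw [hs] at hseq
        linarith
      have hcons : ∀ (k'' : ℤ) (i'' : Fin d),
          μ ^ aExp N (k'' + 1) * q 0 (bIdx N hN (k'' + 1)) i''
            = μ ^ aExp N k'' * q 1 (bIdx N hN k'') i'' := by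
        intro k'' i''
        rw [hbc]
        exact consistency d N hN μ hμ (q 0) k'' i''
      -- left-sided derivative
      have hmem1 : t / Δ - ((k:ℝ) - 1) ∈ Set.Icc (0:ℝ) 1 := by
        rw [← hs]; exact ⟨le_of_lt hspos, hsle⟩
      have hDg := hg k t hmem1
      have htlo : ((k:ℝ) - 1) * Δ < t := by
        rw [hts]
        have := mul_lt_mul_of_pos_right (show (k:ℝ) - 1 < s + (k:ℝ) - 1 by linarith) hΔ
        linarith
      have hxft : xf t = (fun i => μ ^ aExp N k *
          q (t / Δ - ((k:ℝ) - 1)) (bIdx N hN k) i) := by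
        funext i
        rw [hxf]
      have hl : HasDerivWithinAt xf (fun i => (Δ:ℂ)⁻¹ * (μ ^ aExp N k *
            Aop d h N hN Δ A nn (t / Δ - ((k:ℝ) - 1)) μ (q (t / Δ - ((k:ℝ) - 1))) (bIdx N hN k) i))
          (Set.Iic t) t := by
        refine (hDg.hasDerivWithinAt).congr_of_eventuallyEq ?_ ?_
        · have h1 : Set.Ioi (((k:ℝ) - 1) * Δ) ∈ nhdsWithin t (Set.Iic t) :=
            nhdsWithin_le_nhds (isOpen_Ioi.mem_nhds htlo)
          have h2 : Set.Iic t ∈ nhdsWithin t (Set.Iic t) := self_mem_nhdsWithin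
          filter_upwards [h1, h2] with t' h1' h2'
          have hc : ⌈t' / Δ⌉ = k := by
            rw [Int.ceil_eq_iff]
            constructor
            · rw [lt_div_iff₀ hΔ]
              exact h1'
            · rw [div_le_iff₀ hΔ]
              have h3 : t' ≤ t := h2'
              have h4 : t = (k:ℝ) * Δ := by rw [hts, hseq]; ring
              linarith
          funext i
          rw [hxf]
          simp only
          rw [hc]
        · exact hxft
      -- right-sided derivative
      have harg0 : t / Δ - ((((k + 1 : ℤ)):ℝ) - 1) = 0 := by push_cast; rw [htk]; ring
      have hmem2 : t / Δ - ((((k + 1 : ℤ)):ℝ) - 1) ∈ Set.Icc (0:ℝ) 1 := by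
        rw [harg0]
        exact ⟨le_refl 0, zero_le_one⟩
      have hDg' := hg (k + 1) t hmem2
      have hthi' : t < (((k + 1 : ℤ)):ℝ) * Δ := by
        have h4 : t = (k:ℝ) * Δ := by rw [hts, hseq]; ring
        push_cast
        have := mul_lt_mul_of_pos_right (show (k:ℝ) < (k:ℝ) + 1 by linarith) hΔ
        linarith
      have hglue : xf t = fun i => μ ^ aExp N (k + 1) *
          q (t / Δ - ((((k + 1 : ℤ)):ℝ) - 1)) (bIdx N hN (k + 1)) i := by
        funext i
        rw [hxf]
        simp only
        rw [← hk]
        rw [show t / Δ - ((k:ℝ) - 1) = 1 from by rw [htk]; ring]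
        rw [harg0]
        exact (hcons k i).symm
      have hr : HasDerivWithinAt xf (fun i => (Δ:ℂ)⁻¹ * (μ ^ aExp N (k + 1) *
            Aop d h N hN Δ A nn (t / Δ - ((((k + 1 : ℤ)):ℝ) - 1)) μ
              (q (t / Δ - ((((k + 1 : ℤ)):ℝ) - 1))) (bIdx N hN (k + 1)) i))
          (Set.Ici t) t := by
        refine (hDg'.hasDerivWithinAt).congr_of_eventuallyEq ?_ ?_
        · have h1 : Set.Iio ((((k + 1 : ℤ)):ℝ) * Δ) ∈ nhdsWithin t (Set.Ici t) :=
            nhdsWithin_le_nhds (isOpen_Iio.mem_nhds hthi')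
          have h2 : Set.Ici t ∈ nhdsWithin t (Set.Ici t) := self_mem_nhdsWithin
          filter_upwards [h1, h2] with t' h1' h2'
          have h3 : t ≤ t' := h2'
          rcases eq_or_lt_of_le h3 with heq' | hlt'
          · rw [← heq']
            exact hglue
          · have hc : ⌈t' / Δ⌉ = k + 1 := by
              rw [Int.ceil_eq_iff]
              constructor
              · push_cast
                rw [lt_div_iff₀ hΔ]
                have h4 : t = (k:ℝ) * Δ := by rw [hts, hseq]; ring
                have h5 : ((k:ℝ) + 1 - 1) * Δ = t := by rw [h4]; ring
                linarith
              · rw [div_le_iff₀ hΔ]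
                exact le_of_lt h1'
            funext i
            rw [hxf]
            simp only
            rw [hc]
        · exact hglue
      -- identify both values with the target value
      have hrG : (fun i => (Δ:ℂ)⁻¹ * (μ ^ aExp N (k + 1) *
            Aop d h N hN Δ A nn (t / Δ - ((((k + 1 : ℤ)):ℝ) - 1)) μ
              (q (t / Δ - ((((k + 1 : ℤ)):ℝ) - 1))) (bIdx N hN (k + 1)) i))
          = (fun i => ∑ j : Fin (h+1), ∑ i' : Fin d, ((A j t) i i' : ℂ) *
              (μ ^ aExp N (k - (nn j:ℤ)) * q s (bIdx N hN (k - (nn j:ℤ))) i')) := by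
        funext i
        rw [harg0]
        rw [eq_lemma d h N hN Δ hΔ A hper nn μ hμ (q 0) 0 (k + 1) i]
        refine Finset.sum_congr rfl fun j _ => ?_
        rw [show ((0:ℝ) + (((k + 1 : ℤ)):ℝ) - 1) * Δ = t from by
          push_cast; rw [hts, hseq]; ring]
        refine Finset.sum_congr rfl fun i' _ => ?_
        rw [show k + 1 - (nn j : ℤ) = (k - (nn j:ℤ)) + 1 from by ring]
        rw [hcons (k - (nn j:ℤ)) i', hseq]
      rw [hDG] at hl
      rw [hrG] at hr
      have hu := hl.union hr
      rw [Set.Iic_union_Ici] at hu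
      exact hasDerivWithinAt_univ.mp hu
  · -- periodicity
    intro t
    funext i
    simp only
    have h1 : (t + (N:ℝ) * Δ) / Δ = t / Δ + ((N:ℤ):ℝ) := by
      push_cast; field_simp
    have h2 : ⌈t / Δ + ((N:ℤ):ℝ)⌉ = ⌈t / Δ⌉ + (N:ℤ) := Int.ceil_add_intCast _ _
    rw [h1, h2]
    rw [show (⌈t/Δ⌉ + (N:ℤ)) = (⌈t/Δ⌉ + (N:ℕ) : ℤ) by push_cast; ring]
    rw [aExp_addN N hN, bIdx_addN N hN, zpow_add_one₀ hμ]
    rw [show t / Δ + ((N:ℤ):ℝ) - (((⌈t/Δ⌉ + ((N:ℕ):ℤ) : ℤ):ℝ) - 1) = t / Δ - (((⌈t/Δ⌉:ℤ):ℝ) - 1) by push_cast; ring]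
    ring
end
end

section
/- Let μ ∈ ℂ with μ ≠ 0. There exists a Floquet solution of the scalar delay system with multiplier μ (i.e., a differentiable x : ℝ → ℂ, not identically zero, with x'(t) = Σ_{j=0}^h A_j(t) x(t − jτ) for all t ∈ ℝ and x(t + τ) = μ x(t) for all t ∈ ℝ) if and only if exp(Σ_{j=0}^h μ^{−j} a_j) = μ. (Characteristic equation (2.12) for the Floquet multipliers of a scalar system with commensurate delays and T = τ, from Example 2.5.) -/
open scoped BigOperators

noncomputable section

/-- **Example 2.5 / characteristic equation (2.12).** For the scalar `τ`-periodic delay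
system `x'(t) = Σ_{j=0}^h A_j(t) x(t - jτ)` with `T = τ`, a nonzero `μ ∈ ℂ` is a Floquet
multiplier (i.e. there is a not-identically-zero differentiable `x : ℝ → ℂ` solving the
equation with `x(t+τ) = μ x(t)`) if and only if `exp(Σ_j μ^{-j} a_j) = μ`, where
`a_j = ∫_0^τ A_j(t) dt`. -/
theorem scalar_characteristic_equation
    (h : ℕ) (τ : ℝ) (hτ : 0 < τ)
    (A : Fin (h+1) → ℝ → ℝ)
    (hA : ∀ j, Continuous (A j))
    (hper : ∀ j t, A j (t + τ) = A j t)
    (μ : ℂ) (hμ : μ ≠ 0) :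
    (∃ x : ℝ → ℂ, (∃ t, x t ≠ 0) ∧
      (∀ t : ℝ, HasDerivAt x (∑ j : Fin (h+1), (A j t : ℂ) * x (t - ((j : ℕ) : ℝ) * τ)) t) ∧
      (∀ t : ℝ, x (t + τ) = μ * x t)) ↔
    Complex.exp (∑ j : Fin (h+1), μ ^ (-((j : ℕ) : ℤ)) * ((∫ t in (0:ℝ)..τ, A j t : ℝ) : ℂ))
      = μ := by
  set B : ℝ → ℂ := fun t => ∑ j : Fin (h+1), μ ^ (-((j : ℕ) : ℤ)) * (A j t : ℂ) with hB
  have hBcont : Continuous B := by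
    apply continuous_finset_sum
    intro j _
    exact continuous_const.mul (Complex.continuous_ofReal.comp (hA j))
  have hBint : ∀ a b : ℝ, IntervalIntegrable B MeasureTheory.volume a b :=
    fun a b => hBcont.intervalIntegrable a b
  set F : ℝ → ℂ := fun t => ∫ s in (0:ℝ)..t, B s with hF
  have hFderiv : ∀ t, HasDerivAt F (B t) t := fun t =>
    intervalIntegral.integral_hasDerivAt_right (hBint 0 t)
      (hBcont.stronglyMeasurableAtFilter _ _) hBcont.continuousAt
  have hBper : ∀ t, B (t + τ) = B t := by
    intro t; simp only [hB, hper]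
  have hFadd : ∀ t, F (t + τ) = F τ + F t := by
    intro t
    have h1 : F (t + τ) = F τ + ∫ s in τ..(t + τ), B s := by
      show (∫ s in (0:ℝ)..(t + τ), B s) = (∫ s in (0:ℝ)..τ, B s) + ∫ s in τ..(t + τ), B s
      rw [intervalIntegral.integral_add_adjacent_intervals (hBint 0 τ) (hBint τ (t + τ))]
    have h2 : (∫ s in τ..(t + τ), B s) = F t := by
      have h3 := intervalIntegral.integral_comp_add_right (a := (0:ℝ)) (b := t) (d := τ) B
      simp only [zero_add] at h3
      show (∫ s in τ..(t + τ), B s) = ∫ s in (0:ℝ)..t, B s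
      rw [← h3]
      exact intervalIntegral.integral_congr fun s _ => (hBper s).symm ▸ rfl
    rw [h1, h2]
  have hFτ : F τ = ∑ j : Fin (h+1),
      μ ^ (-((j : ℕ) : ℤ)) * ((∫ t in (0:ℝ)..τ, A j t : ℝ) : ℂ) := by
    show (∫ s in (0:ℝ)..τ, ∑ j : Fin (h+1), μ ^ (-((j : ℕ) : ℤ)) * (A j s : ℂ)) = _
    have hsum := intervalIntegral.integral_finset_sum (a := (0:ℝ)) (b := τ) (μ := MeasureTheory.volume)
      (s := (Finset.univ : Finset (Fin (h+1))))
      (f := fun j s => μ ^ (-((j : ℕ) : ℤ)) * (A j s : ℂ))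
      (fun j _ => (continuous_const.mul (Complex.continuous_ofReal.comp (hA j))).intervalIntegrable _ _)
    rw [hsum]
    refine Finset.sum_congr rfl fun j _ => ?_
    rw [intervalIntegral.integral_const_mul, intervalIntegral.integral_ofReal]
  -- shift lemma
  have key : ∀ x : ℝ → ℂ, (∀ t, x (t + τ) = μ * x t) →
      ∀ (n : ℕ) (t : ℝ), x (t - (n : ℝ) * τ) = μ ^ (-(n : ℤ)) * x t := by
    intro x hx n
    induction n with
    | zero => intro t; simp
    | succ n ih =>
      intro t
      have e1 : t - ((n + 1 : ℕ) : ℝ) * τ = (t - τ) - (n : ℝ) * τ := by push_cast; ring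
      have e2 : x (t - τ) = μ ^ (-(1 : ℤ)) * x t := by
        have := hx (t - τ)
        rw [sub_add_cancel] at this
        field_simp [zpow_neg]
        linear_combination this.symm
      rw [e1, ih (t - τ), e2, ← mul_assoc, ← zpow_add₀ hμ,
        show (-(n:ℤ) + -1) = -(((n+1 : ℕ) : ℤ)) by push_cast; ring]
  have sum_eq : ∀ x : ℝ → ℂ, (∀ t, x (t + τ) = μ * x t) → ∀ t,
      (∑ j : Fin (h+1), (A j t : ℂ) * x (t - ((j : ℕ) : ℝ) * τ)) = B t * x t := by
    intro x hx t
    rw [hB, Finset.sum_mul]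
    refine Finset.sum_congr rfl fun j _ => ?_
    rw [key x hx (j : ℕ) t]
    ring
  constructor
  · rintro ⟨x, ⟨t0, ht0⟩, hderiv, hmul⟩
    have hODE : ∀ t, HasDerivAt x (B t * x t) t := by
      intro t
      have := hderiv t
      rwa [sum_eq x hmul t] at this
    set y : ℝ → ℂ := fun t => x t * Complex.exp (-F t) with hy
    have hy' : ∀ t, HasDerivAt y 0 t := by
      intro t
      have hE : HasDerivAt (fun t => Complex.exp (-F t)) (Complex.exp (-F t) * (-B t)) t :=
        ((hFderiv t).neg).cexp
      have := (hODE t).mul hE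
      have e : B t * x t * Complex.exp (-F t) + x t * (Complex.exp (-F t) * -B t) = 0 := by ring
      rw [e] at this
      exact this
    have hconst : ∀ s t : ℝ, y s = y t :=
      is_const_of_deriv_eq_zero (fun t => (hy' t).differentiableAt) (fun t => (hy' t).deriv)
    have hF0 : F 0 = 0 := by simp [hF]
    have hx0 : x 0 ≠ 0 := by
      intro h0
      have := hconst t0 0
      rw [hy] at this
      simp only [h0, zero_mul, mul_eq_zero] at this
      rcases this with h | h
      · exact ht0 h
      · exact Complex.exp_ne_zero _ h
    have hxτ : x τ = μ * x 0 := by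
      have := hmul 0; rwa [zero_add] at this
    have hyy := hconst τ 0
    rw [hy] at hyy
    simp only [hF0, neg_zero, Complex.exp_zero, mul_one] at hyy
    rw [hxτ] at hyy
    rw [← hFτ]
    rw [Complex.exp_neg] at hyy
    field_simp at hyy
    have hmm : Complex.exp (F τ) * x 0 = μ * x 0 := by linear_combination (x 0) * hyy.symm
    exact mul_right_cancel₀ hx0 hmm
  · intro hchar
    set X : ℝ → ℂ := fun t => Complex.exp (F t) with hX
    have hmulx : ∀ s, X (s + τ) = μ * X s := by
      intro s
      show Complex.exp (F (s + τ)) = μ * Complex.exp (F s)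
      rw [hFadd s, Complex.exp_add, hFτ, hchar]
    refine ⟨X, ⟨0, Complex.exp_ne_zero _⟩, ?_, hmulx⟩
    intro t
    have hd : HasDerivAt X (Complex.exp (F t) * B t) t := (hFderiv t).cexp
    rw [sum_eq X hmulx t]
    rw [show B t * X t = Complex.exp (F t) * B t by rw [hX]; ring]
    exact hd
end
end

section
/- Let v ∈ (ℂ^d)^N and μ_0 ∈ ℂ with μ_0 ≠ 0. Suppose that for every μ in some open neighborhood U ⊆ ℂ \ {0} of μ_0 there is a differentiable Q(μ) : [0,1] → (ℂ^d)^N with Q(μ)(0) = v and (Q(μ))'(s) = A(s, μ) Q(μ)(s) for all s ∈ [0,1], and suppose Q(μ_0)(1) = B(μ_0)v (i.e., (μ_0, v) is an eigenpair of the characteristic matrix). Let r : [0,1] → (ℂ^d)^N be differentiable with r(0) = 0 and r'(s) = (∂A/∂μ)(s, μ_0) Q(μ_0)(s) + A(s, μ_0) r(s) for all s ∈ [0,1]. Then the map μ ↦ Q(μ)(1) − B(μ)v (i.e., μ ↦ N(μ)v) is complex-differentiable at μ_0 with derivative r(1) − v_N, where v_N = (0, …, 0, v_1) ∈ (ℂ^d)^N.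 (Proposition 3.1: derivative of the characteristic matrix–vector product with respect to μ via the variational equation.) -/
open scoped BigOperators

noncomputable section

/-- The block linear map `(∂A/∂μ)(s,μ)` acting on `(ℂ^d)^N`:
`((∂A/∂μ)(s,μ)q)_n = Δ Σ_j a_{n-n_j} μ^{a_{n-n_j}-1} A_j((s+n-1)Δ) q_{b_{n-n_j}}`. -/
def AopDmu (d h N : ℕ) (hN : 0 < N) (Δ : ℝ)
    (A : Fin (h+1) → ℝ → Matrix (Fin d) (Fin d) ℝ) (nn : Fin (h+1) → ℕ)
    (s : ℝ) (μ : ℂ) (q : Fin N → Fin d → ℂ) : Fin N → Fin d → ℂ :=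
  fun n i => (Δ : ℂ) * ∑ j : Fin (h+1),
    (aExp N (((n : ℕ) : ℤ) + 1 - (nn j : ℤ)) : ℂ) *
      μ ^ (aExp N (((n : ℕ) : ℤ) + 1 - (nn j : ℤ)) - 1) *
      ∑ i' : Fin d, ((A j ((s + ((n : ℕ) : ℝ)) * Δ)) i i' : ℂ) *
        q (bIdx N hN (((n : ℕ) : ℤ) + 1 - (nn j : ℤ))) i'

/- ================= helpers ================= -/

def gOp (d h N : ℕ) (c : Fin N → Fin (h+1) → ℂ)
    (m : Fin N → Fin (h+1) → Matrix (Fin d) (Fin d) ℝ)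
    (idx : Fin N → Fin (h+1) → Fin N)
    (q : Fin N → Fin d → ℂ) : Fin N → Fin d → ℂ :=
  fun n i => ∑ j : Fin (h+1), c n j * ∑ i' : Fin d, ((m n j i i' : ℝ) : ℂ) * q (idx n j) i'

section gop
variable {d h N : ℕ} {c c₁ c₂ : Fin N → Fin (h+1) → ℂ}
  {m : Fin N → Fin (h+1) → Matrix (Fin d) (Fin d) ℝ}
  {idx : Fin N → Fin (h+1) → Fin N}

lemma gOp_sub_q (q₁ q₂ : Fin N → Fin d → ℂ) :
    gOp d h N c m idx (q₁ - q₂) = gOp d h N c m idx q₁ - gOp d h N c m idx q₂ := by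
  funext n i
  simp [gOp, Pi.sub_apply, mul_sub, Finset.sum_sub_distrib]

lemma gOp_smul_q (a : ℂ) (q : Fin N → Fin d → ℂ) :
    gOp d h N c m idx (a • q) = a • gOp d h N c m idx q := by
  funext n i
  simp [gOp, Finset.mul_sum]
  refine Finset.sum_congr rfl fun j _ => Finset.sum_congr rfl fun i' _ => by ring

lemma gOp_sub_c (q : Fin N → Fin d → ℂ) :
    gOp d h N (c₁ - c₂) m idx q = gOp d h N c₁ m idx q - gOp d h N c₂ m idx q := by
  funext n i
  simp [gOp, Pi.sub_apply, sub_mul, Finset.sum_sub_distrib]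

lemma gOp_smul_c (a : ℂ) (q : Fin N → Fin d → ℂ) :
    gOp d h N (a • c) m idx q = a • gOp d h N c m idx q := by
  funext n i
  simp [gOp, Finset.mul_sum]
  refine Finset.sum_congr rfl fun j _ => Finset.sum_congr rfl fun i' _ => by ring

lemma gOp_norm_le (q : Fin N → Fin d → ℂ) (Cc Cm : ℝ)
    (hCc0 : 0 ≤ Cc) (hCm0 : 0 ≤ Cm)
    (hCc : ∀ n j, ‖c n j‖ ≤ Cc) (hCm : ∀ n j i i', |m n j i i'| ≤ Cm) :
    ‖gOp d h N c m idx q‖ ≤ ((h+1) * Cc * (d * Cm)) * ‖q‖ := by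
  have hR : 0 ≤ ((h+1) * Cc * (d * Cm)) * ‖q‖ := by positivity
  rw [pi_norm_le_iff_of_nonneg hR]
  intro n
  rw [pi_norm_le_iff_of_nonneg hR]
  intro i
  have hq : ∀ a b, ‖q a b‖ ≤ ‖q‖ := fun a b =>
    (norm_le_pi_norm (q a) b).trans (norm_le_pi_norm q a)
  calc ‖∑ j : Fin (h+1), c n j * ∑ i' : Fin d, ((m n j i i' : ℝ) : ℂ) * q (idx n j) i'‖
      ≤ ∑ j : Fin (h+1), ‖c n j * ∑ i' : Fin d, ((m n j i i' : ℝ) : ℂ) * q (idx n j) i'‖ :=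
        norm_sum_le _ _
    _ ≤ ∑ _j : Fin (h+1), Cc * (d * Cm * ‖q‖) := by
        refine Finset.sum_le_sum fun j _ => ?_
        rw [norm_mul]
        refine mul_le_mul (hCc n j) ?_ (norm_nonneg _) hCc0
        calc ‖∑ i' : Fin d, ((m n j i i' : ℝ) : ℂ) * q (idx n j) i'‖
            ≤ ∑ i' : Fin d, ‖((m n j i i' : ℝ) : ℂ) * q (idx n j) i'‖ := norm_sum_le _ _
          _ ≤ ∑ _i' : Fin d, Cm * ‖q‖ := by
              refine Finset.sum_le_sum fun i' _ => ?_
              rw [norm_mul, Complex.norm_real, Real.norm_eq_abs]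
              exact mul_le_mul (hCm n j i i') (hq _ _) (norm_nonneg _) hCm0
          _ = d * Cm * ‖q‖ := by simp [mul_assoc]
    _ = ((h+1) * Cc * (d * Cm)) * ‖q‖ := by simp; ring

end gop

lemma zpow_lip (μ0 : ℂ) (ρ M : ℝ)
    (h0 : ∀ z ∈ Metric.closedBall μ0 ρ, z ≠ 0) (m : ℤ)
    (hM : ∀ z ∈ Metric.closedBall μ0 ρ, ‖z ^ (m-1)‖ ≤ M) :
    ∀ μ ∈ Metric.closedBall μ0 ρ, ‖μ ^ m - μ0 ^ m‖ ≤ (|(m:ℝ)| * M) * ‖μ - μ0‖ := by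
  intro μ hμ
  have hρ0 : 0 ≤ ρ := by
    by_contra hc
    exact absurd hμ (by simp [Metric.closedBall_eq_empty.2 (not_le.1 hc)])
  have hμ0B : μ0 ∈ Metric.closedBall μ0 ρ := Metric.mem_closedBall_self hρ0
  refine Convex.norm_image_sub_le_of_norm_hasDerivWithin_le
    (f := fun z => z ^ m) (f' := fun z => (m : ℂ) * z ^ (m-1))
    (fun z hz => (hasDerivAt_zpow m z (Or.inl (h0 z hz))).hasDerivWithinAt)
    (fun z hz => ?_) (convex_closedBall _ _) hμ0B hμ
  rw [norm_mul, Complex.norm_intCast]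
  exact mul_le_mul le_rfl (hM z hz) (norm_nonneg _) (abs_nonneg _)

lemma zpow_taylor (μ0 : ℂ) (ρ M : ℝ)
    (h0 : ∀ z ∈ Metric.closedBall μ0 ρ, z ≠ 0) (m : ℤ)
    (hM2 : ∀ z ∈ Metric.closedBall μ0 ρ, ‖z ^ (m-2)‖ ≤ M) :
    ∀ μ ∈ Metric.closedBall μ0 ρ,
      ‖μ ^ m - μ0 ^ m - (μ - μ0) * ((m:ℂ) * μ0 ^ (m-1))‖
        ≤ (|(m:ℝ)| * (|(m:ℝ)-1| * M)) * (‖μ - μ0‖ * ‖μ - μ0‖) := by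
  intro μ hμ
  have htρ : ‖μ - μ0‖ ≤ ρ := by rwa [Metric.mem_closedBall, dist_eq_norm] at hμ
  have ht0 : (0:ℝ) ≤ ‖μ - μ0‖ := norm_nonneg _
  have hρ0 : 0 ≤ ρ := le_trans ht0 htρ
  have hsub : Metric.closedBall μ0 ‖μ - μ0‖ ⊆ Metric.closedBall μ0 ρ :=
    Metric.closedBall_subset_closedBall htρ
  have h0' : ∀ z ∈ Metric.closedBall μ0 ‖μ - μ0‖, z ≠ 0 := fun z hz => h0 z (hsub hz)
  have hMnn : 0 ≤ M := le_trans (norm_nonneg _) (hM2 μ0 (Metric.mem_closedBall_self hρ0))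
  have hM' : ∀ z ∈ Metric.closedBall μ0 ‖μ - μ0‖, ‖z ^ (m-1-1)‖ ≤ M := by
    intro z hz
    have he : m - 1 - 1 = m - 2 := by ring
    rw [he]; exact hM2 z (hsub hz)
  have hlip := zpow_lip μ0 ‖μ - μ0‖ M h0' (m-1) hM'
  have hμB : μ ∈ Metric.closedBall μ0 ‖μ - μ0‖ := by
    rw [Metric.mem_closedBall, dist_eq_norm]
  have hμ0B : μ0 ∈ Metric.closedBall μ0 ‖μ - μ0‖ := Metric.mem_closedBall_self ht0
  have key : ‖(μ ^ m - μ * ((m:ℂ) * μ0 ^ (m-1))) - (μ0 ^ m - μ0 * ((m:ℂ) * μ0 ^ (m-1)))‖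
      ≤ (|(m:ℝ)| * (|(m:ℝ)-1| * M) * ‖μ - μ0‖) * ‖μ - μ0‖ := by
    refine Convex.norm_image_sub_le_of_norm_hasDerivWithin_le
      (f := fun z => z ^ m - z * ((m:ℂ) * μ0 ^ (m-1)))
      (f' := fun z => (m : ℂ) * z ^ (m-1) - (m:ℂ) * μ0 ^ (m-1))
      (fun z hz => ((hasDerivAt_zpow m z (Or.inl (h0' z hz))).sub
        (hasDerivAt_mul_const ((m:ℂ) * μ0 ^ (m-1)))).hasDerivWithinAt)
      (fun z hz => ?_) (convex_closedBall _ _) hμ0B hμB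
    have hfac : (m : ℂ) * z ^ (m-1) - (m:ℂ) * μ0 ^ (m-1)
        = (m:ℂ) * (z ^ (m-1) - μ0 ^ (m-1)) := by ring
    rw [hfac, norm_mul, Complex.norm_intCast]
    have h1 := hlip z hz
    have h2 : ‖z - μ0‖ ≤ ‖μ - μ0‖ := by rwa [Metric.mem_closedBall, dist_eq_norm] at hz
    have h3 : (|((m-1 : ℤ):ℝ)| * M) * ‖z - μ0‖ ≤ (|(m:ℝ)-1| * M) * ‖μ - μ0‖ := by
      push_cast
      exact mul_le_mul le_rfl h2 (norm_nonneg _) (by positivity)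
    calc |(m:ℝ)| * ‖z ^ (m-1) - μ0 ^ (m-1)‖
        ≤ |(m:ℝ)| * ((|(m:ℝ)-1| * M) * ‖μ - μ0‖) :=
          mul_le_mul le_rfl (h1.trans h3) (norm_nonneg _) (abs_nonneg _)
      _ = |(m:ℝ)| * (|(m:ℝ)-1| * M) * ‖μ - μ0‖ := by ring
  have hEq : (μ ^ m - μ * ((m:ℂ) * μ0 ^ (m-1))) - (μ0 ^ m - μ0 * ((m:ℂ) * μ0 ^ (m-1)))
      = μ ^ m - μ0 ^ m - (μ - μ0) * ((m:ℂ) * μ0 ^ (m-1)) := by ring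
  rw [hEq] at key
  calc ‖μ ^ m - μ0 ^ m - (μ - μ0) * ((m:ℂ) * μ0 ^ (m-1))‖
      ≤ (|(m:ℝ)| * (|(m:ℝ)-1| * M) * ‖μ - μ0‖) * ‖μ - μ0‖ := key
    _ = (|(m:ℝ)| * (|(m:ℝ)-1| * M)) * (‖μ - μ0‖ * ‖μ - μ0‖) := by ring

lemma gronwall_simple {E : Type*} [NormedAddCommGroup E] [NormedSpace ℝ E]
    (f f' : ℝ → E) (K ε : ℝ) (hK : 0 < K) (hε : 0 ≤ ε)
    (hf : ∀ s ∈ Set.Icc (0:ℝ) 1, HasDerivAt f (f' s) s) (h0 : f 0 = 0)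
    (hb : ∀ s ∈ Set.Icc (0:ℝ) 1, ‖f' s‖ ≤ K * ‖f s‖ + ε) :
    ∀ s ∈ Set.Icc (0:ℝ) 1, ‖f s‖ ≤ ε * (Real.exp K / K) := by
  intro s hs
  have hcont : ContinuousOn f (Set.Icc 0 1) := fun x hx =>
    (hf x hx).continuousAt.continuousWithinAt
  have hderiv : ∀ x ∈ Set.Ico (0:ℝ) 1, HasDerivWithinAt f (f' x) (Set.Ici x) x := fun x hx =>
    (hf x (Set.mem_Icc_of_Ico hx)).hasDerivWithinAt
  have hbound : ∀ x ∈ Set.Ico (0:ℝ) 1, ‖f' x‖ ≤ K * ‖f x‖ + ε := fun x hx =>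
    hb x (Set.mem_Icc_of_Ico hx)
  have h := norm_le_gronwallBound_of_norm_deriv_right_le (δ := 0) hcont hderiv
    (by simp [h0]) hbound s hs
  rw [gronwallBound_of_K_ne_0 (ne_of_gt hK)] at h
  simp only [zero_mul, zero_add, sub_zero] at h
  refine h.trans ?_
  have h1 : Real.exp (K * s) - 1 ≤ Real.exp K := by
    have : K * s ≤ K := by nlinarith [hs.1, hs.2]
    nlinarith [Real.exp_le_exp.2 this, Real.exp_pos (K*s)]
  calc ε / K * (Real.exp (K * s) - 1) ≤ ε / K * Real.exp K :=
        mul_le_mul_of_nonneg_left h1 (div_nonneg hε hK.le)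
    _ = ε * (Real.exp K / K) := by ring

set_option maxHeartbeats 1000000 in
/-- **Proposition 3.1.** If `(μ₀, v)` is an eigenpair of the characteristic matrix
(`Q(μ₀)(1) = B(μ₀)v`, where `Q(μ)` solves `Q' = A(s,μ)Q`, `Q(0) = v` for all `μ` in a
neighborhood `U ⊆ ℂ \ {0}` of `μ₀`), and `r` solves the variational equation
`r' = (∂A/∂μ)(s,μ₀) Q(μ₀) + A(s,μ₀) r`, `r(0) = 0`, then `μ ↦ N(μ)v = Q(μ)(1) - B(μ)v`
is complex-differentiable at `μ₀` with derivative `r(1) - v_N`,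
`v_N = (0,…,0,v₁)`. -/
theorem charmatrix_deriv_mu
    (d h N : ℕ) (hd : 0 < d) (hN : 0 < N) (Δ : ℝ) (hΔ : 0 < Δ)
    (A : Fin (h+1) → ℝ → Matrix (Fin d) (Fin d) ℝ)
    (hA : ∀ j, Continuous (A j))
    (hper : ∀ j t, A j (t + (N : ℝ) * Δ) = A j t)
    (nn : Fin (h+1) → ℕ) (hn0 : nn 0 = 0)
    (hmono : ∀ i j : Fin (h+1), 1 ≤ (i : ℕ) → i < j → nn i < nn j)
    (μ0 : ℂ) (hμ0 : μ0 ≠ 0) (v : Fin N → Fin d → ℂ)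
    (U : Set ℂ) (hUopen : IsOpen U) (hU0 : (0:ℂ) ∉ U) (hUμ : μ0 ∈ U)
    (Q : ℂ → ℝ → Fin N → Fin d → ℂ)
    (hQ0 : ∀ μ ∈ U, Q μ 0 = v)
    (hQode : ∀ μ ∈ U, ∀ s ∈ Set.Icc (0:ℝ) 1,
      HasDerivAt (Q μ) (Aop d h N hN Δ A nn s μ (Q μ s)) s)
    (heig : Q μ0 1 = Bop d N hN μ0 v)
    (r : ℝ → Fin N → Fin d → ℂ) (hr0 : r 0 = 0)
    (hrode : ∀ s ∈ Set.Icc (0:ℝ) 1, HasDerivAt r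
      (fun n i => AopDmu d h N hN Δ A nn s μ0 (Q μ0 s) n i
        + Aop d h N hN Δ A nn s μ0 (r s) n i) s) :
    HasDerivAt (fun μ : ℂ => fun (n : Fin N) (i : Fin d) => Q μ 1 n i - Bop d N hN μ v n i)
      (fun (n : Fin N) (i : Fin d) =>
        r 1 n i - (if (n : ℕ) = N - 1 then v ⟨0, hN⟩ i else 0)) μ0 := by
    classical
  -- abbreviations
  set e : Fin N → Fin (h+1) → ℤ :=
    fun n j => aExp N (((n : ℕ) : ℤ) + 1 - (nn j : ℤ)) with he
  set idx : Fin N → Fin (h+1) → Fin N :=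
    fun n j => bIdx N hN (((n : ℕ) : ℤ) + 1 - (nn j : ℤ)) with hidx
  set mS : ℝ → Fin N → Fin (h+1) → Matrix (Fin d) (Fin d) ℝ :=
    fun s n j => A j ((s + ((n : ℕ) : ℝ)) * Δ) with hmS
  set cf : ℂ → Fin N → Fin (h+1) → ℂ :=
    fun μ n j => (Δ : ℂ) * μ ^ e n j with hcf
  set cD : Fin N → Fin (h+1) → ℂ :=
    fun n j => (Δ : ℂ) * ((e n j : ℂ) * μ0 ^ (e n j - 1)) with hcD
  have hAop : ∀ s μ q, Aop d h N hN Δ A nn s μ q = gOp d h N (cf μ) (mS s) idx q := by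
    intro s μ q
    funext n i
    simp only [Aop, gOp, hcf, he, hidx, hmS, Finset.mul_sum]
    exact Finset.sum_congr rfl fun j _ => Finset.sum_congr rfl fun x _ => by ring
  have hAopD : ∀ s q, AopDmu d h N hN Δ A nn s μ0 q = gOp d h N cD (mS s) idx q := by
    intro s q
    funext n i
    simp only [AopDmu, gOp, hcD, he, hidx, hmS, Finset.mul_sum]
    exact Finset.sum_congr rfl fun j _ => Finset.sum_congr rfl fun x _ => by ring
  -- the ball
  obtain ⟨εU, hεU, hballU⟩ := Metric.isOpen_iff.1 hUopen μ0 hUμ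
  set ρ : ℝ := εU / 2 with hρdef
  have hρ : 0 < ρ := by positivity
  have hBU : Metric.closedBall μ0 ρ ⊆ U :=
    (Metric.closedBall_subset_ball (by simp [hρdef]; linarith)).trans hballU
  have hB0 : ∀ z ∈ Metric.closedBall μ0 ρ, z ≠ 0 := by
    intro z hz hz0
    exact hU0 (hz0 ▸ hBU hz)
  -- bound M on zpow terms
  have hMex : ∃ M : ℝ, 0 ≤ M ∧ ∀ z ∈ Metric.closedBall μ0 ρ, ∀ n j,
      ‖z ^ e n j‖ + ‖z ^ (e n j - 1)‖ + ‖z ^ (e n j - 2)‖ ≤ M := by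
    have hφc : ContinuousOn (fun z : ℂ => ∑ p : Fin N × Fin (h+1),
        (‖z ^ e p.1 p.2‖ + ‖z ^ (e p.1 p.2 - 1)‖ + ‖z ^ (e p.1 p.2 - 2)‖))
        (Metric.closedBall μ0 ρ) := by
      apply continuousOn_finset_sum
      intro p _
      have hz : ∀ (m : ℤ), ContinuousOn (fun z : ℂ => z ^ m) (Metric.closedBall μ0 ρ) :=
        fun m z hz =>
          ((hasDerivAt_zpow m z (Or.inl (hB0 z hz))).continuousAt).continuousWithinAt
      exact ((hz (e p.1 p.2)).norm.add ((hz (e p.1 p.2 - 1)).norm)).add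
        ((hz (e p.1 p.2 - 2)).norm)
    obtain ⟨z0, hz0B, hz0max⟩ := (isCompact_closedBall μ0 ρ).exists_isMaxOn
      ⟨μ0, Metric.mem_closedBall_self hρ.le⟩ hφc
    refine ⟨∑ p : Fin N × Fin (h+1),
      (‖z0 ^ e p.1 p.2‖ + ‖z0 ^ (e p.1 p.2 - 1)‖ + ‖z0 ^ (e p.1 p.2 - 2)‖), ?_, fun z hz n j => ?_⟩
    · exact Finset.sum_nonneg fun p _ => by positivity
    · refine le_trans ?_ (hz0max hz)
      have H := Finset.single_le_sum (f := fun p : Fin N × Fin (h+1) =>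
        ‖z ^ e p.1 p.2‖ + ‖z ^ (e p.1 p.2 - 1)‖ + ‖z ^ (e p.1 p.2 - 2)‖)
        (s := Finset.univ)
        (fun p _ => by positivity) (Finset.mem_univ (n, j))
      simpa using H
  obtain ⟨M, hMnn, hterm_le⟩ := hMex
  have hM0 : ∀ z ∈ Metric.closedBall μ0 ρ, ∀ n j, ‖z ^ e n j‖ ≤ M := by
    intro z hz n j
    have := hterm_le z hz n j
    have h1 := norm_nonneg (z ^ (e n j - 1)); have h2 := norm_nonneg (z ^ (e n j - 2))
    linarith
  have hM1 : ∀ z ∈ Metric.closedBall μ0 ρ, ∀ n j, ‖z ^ (e n j - 1)‖ ≤ M := by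
    intro z hz n j
    have := hterm_le z hz n j
    have h1 := norm_nonneg (z ^ e n j); have h2 := norm_nonneg (z ^ (e n j - 2))
    linarith
  have hM2 : ∀ z ∈ Metric.closedBall μ0 ρ, ∀ n j, ‖z ^ (e n j - 2)‖ ≤ M := by
    intro z hz n j
    have := hterm_le z hz n j
    have h1 := norm_nonneg (z ^ e n j); have h2 := norm_nonneg (z ^ (e n j - 1))
    linarith
  -- exponent bound
  set Emax : ℝ := ((Finset.univ.sup fun p : Fin N × Fin (h+1) => (e p.1 p.2).natAbs : ℕ) : ℝ) + 1
    with hEdef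
  have hEnn : (0:ℝ) ≤ Emax := by rw [hEdef]; positivity
  have hE : ∀ n j, |(e n j : ℝ)| ≤ Emax := by
    intro n j
    rw [hEdef]
    have h1 : (e n j).natAbs ≤ Finset.univ.sup fun p : Fin N × Fin (h+1) => (e p.1 p.2).natAbs :=
      Finset.le_sup (f := fun p : Fin N × Fin (h+1) => (e p.1 p.2).natAbs) (Finset.mem_univ (n, j))
    have h2 : |(e n j : ℝ)| = ((e n j).natAbs : ℝ) := by
      rw [← Int.cast_abs, Int.abs_eq_natAbs, Int.cast_natCast]
    rw [h2]
    have := (Nat.cast_le (α := ℝ)).2 h1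
    linarith
  have hE1 : ∀ n j, |(e n j : ℝ) - 1| ≤ Emax + 1 := by
    intro n j
    have h1 := hE n j
    calc |(e n j : ℝ) - 1| ≤ |(e n j : ℝ)| + |(1:ℝ)| := abs_sub _ _
      _ ≤ Emax + 1 := by rw [abs_one]; linarith
  -- matrix entry bound
  have hCmex : ∃ C : ℝ, 0 ≤ C ∧ ∀ t ∈ Set.Icc (0:ℝ) ((N:ℝ) * Δ), ∀ j i i', |A j t i i'| ≤ C := by
    have hψc : Continuous (fun t : ℝ => ∑ j : Fin (h+1), ∑ i : Fin d, ∑ i' : Fin d, |A j t i i'|) := by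
      apply continuous_finset_sum; intro j _
      apply continuous_finset_sum; intro i _
      apply continuous_finset_sum; intro i' _
      exact ((continuous_apply i').comp ((continuous_apply i).comp (hA j))).abs
    obtain ⟨t0, ht0B, ht0max⟩ := (isCompact_Icc (a := (0:ℝ)) (b := (N:ℝ) * Δ)).exists_isMaxOn
      ⟨0, by constructor <;> positivity⟩ hψc.continuousOn
    refine ⟨∑ j : Fin (h+1), ∑ i : Fin d, ∑ i' : Fin d, |A j t0 i i'|, ?_, fun t ht j i i' => ?_⟩
    · positivity
    · refine le_trans ?_ (ht0max ht)
      calc |A j t i i'| ≤ ∑ i'' : Fin d, |A j t i i''| :=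
            Finset.single_le_sum (f := fun i'' => |A j t i i''|)
              (fun _ _ => abs_nonneg _) (Finset.mem_univ i')
        _ ≤ ∑ i₀ : Fin d, ∑ i'' : Fin d, |A j t i₀ i''| :=
            Finset.single_le_sum (f := fun i₀ => ∑ i'' : Fin d, |A j t i₀ i''|)
              (fun _ _ => Finset.sum_nonneg fun _ _ => abs_nonneg _) (Finset.mem_univ i)
        _ ≤ ∑ j₀ : Fin (h+1), ∑ i₀ : Fin d, ∑ i'' : Fin d, |A j₀ t i₀ i''| :=
            Finset.single_le_sum (f := fun j₀ => ∑ i₀ : Fin d, ∑ i'' : Fin d, |A j₀ t i₀ i''|)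
              (fun _ _ => Finset.sum_nonneg fun _ _ => Finset.sum_nonneg fun _ _ => abs_nonneg _)
              (Finset.mem_univ j)
  obtain ⟨Cm, hCm0, hCmI⟩ := hCmex
  have hCmB : ∀ s ∈ Set.Icc (0:ℝ) 1, ∀ (n : Fin N) (j : Fin (h+1)) (i i' : Fin d),
      |mS s n j i i'| ≤ Cm := by
    intro s hs n j i i'
    have harg : (s + ((n:ℕ):ℝ)) * Δ ∈ Set.Icc (0:ℝ) ((N:ℝ) * Δ) := by
      constructor
      · have h1 : (0:ℝ) ≤ s := hs.1
        positivity
      · have hn1 : ((n:ℕ):ℝ) + 1 ≤ (N:ℝ) := by exact_mod_cast n.isLt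
        have h2 : s + ((n:ℕ):ℝ) ≤ (N:ℝ) := by have := hs.2; linarith
        exact mul_le_mul_of_nonneg_right h2 hΔ.le
    exact hCmI _ harg j i i'
  -- operator bound helper
  have hgb : ∀ (c : Fin N → Fin (h+1) → ℂ) (Cc : ℝ), 0 ≤ Cc → (∀ n j, ‖c n j‖ ≤ Cc) →
      ∀ s ∈ Set.Icc (0:ℝ) 1, ∀ q : Fin N → Fin d → ℂ,
        ‖gOp d h N c (mS s) idx q‖ ≤ (((h:ℝ)+1) * ((d:ℝ)*Cm) * Cc) * ‖q‖ := by
    intro c Cc hCc0 hCc s hs q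
    have H := gOp_norm_le (c := c) (m := mS s) (idx := idx) q Cc Cm hCc0 hCm0 hCc
      (fun n j i i' => hCmB s hs n j i i')
    calc ‖gOp d h N c (mS s) idx q‖ ≤ ((h+1) * Cc * (d * Cm)) * ‖q‖ := H
      _ = (((h:ℝ)+1) * ((d:ℝ)*Cm) * Cc) * ‖q‖ := by push_cast; ring
  have hΔn : ‖(Δ:ℂ)‖ = Δ := by
    rw [Complex.norm_real, Real.norm_eq_abs, abs_of_pos hΔ]
  -- coefficient bounds
  have hcc0 : ∀ μ ∈ Metric.closedBall μ0 ρ, ∀ (n : Fin N) (j : Fin (h+1)),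
      ‖cf μ n j‖ ≤ Δ * M := by
    intro μ hμ n j
    simp only [hcf]
    rw [norm_mul, hΔn]
    exact mul_le_mul_of_nonneg_left (hM0 μ hμ n j) hΔ.le
  have hccL : ∀ μ ∈ Metric.closedBall μ0 ρ, ∀ (n : Fin N) (j : Fin (h+1)),
      ‖(cf μ - cf μ0) n j‖ ≤ ((Δ * (Emax * M)) * ‖μ - μ0‖) := by
    intro μ hμ n j
    simp only [Pi.sub_apply, hcf]
    have h1 : (Δ:ℂ) * μ ^ e n j - (Δ:ℂ) * μ0 ^ e n j
        = (Δ:ℂ) * (μ ^ e n j - μ0 ^ e n j) := by ring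
    rw [h1, norm_mul, hΔn]
    have h2 := zpow_lip μ0 ρ M hB0 (e n j) (fun z hz => hM1 z hz n j) μ hμ
    have h3 : (|(e n j:ℝ)| * M) * ‖μ - μ0‖ ≤ (Emax * M) * ‖μ - μ0‖ :=
      mul_le_mul_of_nonneg_right (mul_le_mul_of_nonneg_right (hE n j) hMnn) (norm_nonneg _)
    calc Δ * ‖μ ^ e n j - μ0 ^ e n j‖ ≤ Δ * ((Emax * M) * ‖μ - μ0‖) :=
          mul_le_mul_of_nonneg_left (h2.trans h3) hΔ.le
      _ = (Δ * (Emax * M)) * ‖μ - μ0‖ := by ring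
  have hccT : ∀ μ ∈ Metric.closedBall μ0 ρ, ∀ (n : Fin N) (j : Fin (h+1)),
      ‖(cf μ - cf μ0 - (μ - μ0) • cD) n j‖
        ≤ ((Δ * (Emax * ((Emax+1) * M))) * (‖μ - μ0‖ * ‖μ - μ0‖)) := by
    intro μ hμ n j
    simp only [Pi.sub_apply, Pi.smul_apply, smul_eq_mul, hcf, hcD]
    have h1 : (Δ:ℂ) * μ ^ e n j - (Δ:ℂ) * μ0 ^ e n j
        - (μ - μ0) * ((Δ:ℂ) * ((e n j : ℂ) * μ0 ^ (e n j - 1)))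
        = (Δ:ℂ) * (μ ^ e n j - μ0 ^ e n j - (μ - μ0) * ((e n j : ℂ) * μ0 ^ (e n j - 1))) := by
      ring
    rw [h1, norm_mul, hΔn]
    have h2 := zpow_taylor μ0 ρ M hB0 (e n j) (fun z hz => hM2 z hz n j) μ hμ
    have h3 : |(e n j:ℝ)| * (|(e n j:ℝ)-1| * M) ≤ Emax * ((Emax+1) * M) :=
      mul_le_mul (hE n j) (mul_le_mul_of_nonneg_right (hE1 n j) hMnn) (by positivity) hEnn
    have h4 : (|(e n j:ℝ)| * (|(e n j:ℝ)-1| * M)) * (‖μ - μ0‖ * ‖μ - μ0‖)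
        ≤ (Emax * ((Emax+1) * M)) * (‖μ - μ0‖ * ‖μ - μ0‖) :=
      mul_le_mul_of_nonneg_right h3 (by positivity)
    calc Δ * ‖μ ^ e n j - μ0 ^ e n j - (μ - μ0) * ((e n j : ℂ) * μ0 ^ (e n j - 1))‖
        ≤ Δ * ((Emax * ((Emax+1) * M)) * (‖μ - μ0‖ * ‖μ - μ0‖)) :=
          mul_le_mul_of_nonneg_left (h2.trans h4) hΔ.le
      _ = (Δ * (Emax * ((Emax+1) * M))) * (‖μ - μ0‖ * ‖μ - μ0‖) := by ring
  -- sup of ‖Q μ0‖ on [0,1]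
  have hQ0cont : ContinuousOn (Q μ0) (Set.Icc (0:ℝ) 1) := fun s hs =>
    (hQode μ0 hUμ s hs).continuousAt.continuousWithinAt
  obtain ⟨s0, hs0B, hs0max⟩ := (isCompact_Icc (a := (0:ℝ)) (b := 1)).exists_isMaxOn
    ⟨0, Set.left_mem_Icc.2 zero_le_one⟩ hQ0cont.norm
  set MQ : ℝ := ‖Q μ0 s0‖ with hMQdef
  have hMQ : ∀ s ∈ Set.Icc (0:ℝ) 1, ‖Q μ0 s‖ ≤ MQ := fun s hs => hs0max hs
  have hMQ0 : 0 ≤ MQ := norm_nonneg _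
  -- named constants
  set Kb : ℝ := ((h:ℝ)+1) * ((d:ℝ)*Cm) with hKbdef
  have hKbnn : 0 ≤ Kb := by
    rw [hKbdef]
    exact mul_nonneg (by positivity) (mul_nonneg (by positivity) hCm0)
  set K0f : ℝ := Kb * (Δ * M) with hK0fdef
  have hK0fnn : 0 ≤ K0f := mul_nonneg hKbnn (mul_nonneg hΔ.le hMnn)
  set CL0 : ℝ := Kb * (Δ * (Emax * M)) with hCL0def
  have hCL0nn : 0 ≤ CL0 :=
    mul_nonneg hKbnn (mul_nonneg hΔ.le (mul_nonneg hEnn hMnn))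
  set CT0 : ℝ := Kb * (Δ * (Emax * ((Emax+1) * M))) with hCT0def
  have hCT0nn : 0 ≤ CT0 :=
    mul_nonneg hKbnn (mul_nonneg hΔ.le (mul_nonneg hEnn
      (mul_nonneg (by linarith) hMnn)))
  set KA : ℝ := K0f + CL0 * ρ + 1 with hKAdef
  have hKA : 0 < KA := by
    have : 0 ≤ CL0 * ρ := mul_nonneg hCL0nn hρ.le
    rw [hKAdef]; linarith
  set CQ : ℝ := CL0 * MQ * (Real.exp KA / KA) with hCQdef
  have hCQnn : 0 ≤ CQ := by
    rw [hCQdef]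
    have := Real.exp_pos KA
    exact mul_nonneg (mul_nonneg hCL0nn hMQ0) (by positivity)
  -- Step A: Lipschitz estimate for Q in μ
  have hStepA : ∀ μ ∈ Metric.closedBall μ0 ρ, ∀ s ∈ Set.Icc (0:ℝ) 1,
      ‖Q μ s - Q μ0 s‖ ≤ CQ * ‖μ - μ0‖ := by
    intro μ hμ
    have hμU : μ ∈ U := hBU hμ
    have ht : ‖μ - μ0‖ ≤ ρ := by rwa [Metric.mem_closedBall, dist_eq_norm] at hμ
    have htnn : 0 ≤ ‖μ - μ0‖ := norm_nonneg _
    have hG := gronwall_simple (fun s => Q μ s - Q μ0 s)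
      (fun s => gOp d h N (cf μ0) (mS s) idx (Q μ s - Q μ0 s)
        + gOp d h N (cf μ - cf μ0) (mS s) idx (Q μ s))
      KA ((CL0 * MQ) * ‖μ - μ0‖) hKA
      (mul_nonneg (mul_nonneg hCL0nn hMQ0) htnn)
      ?_ ?_ ?_
    · intro s hs
      refine (hG s hs).trans ?_
      calc (CL0 * MQ) * ‖μ - μ0‖ * (Real.exp KA / KA)
          = CQ * ‖μ - μ0‖ := by rw [hCQdef]; ring
        _ ≤ CQ * ‖μ - μ0‖ := le_rfl
    · -- derivative
      intro s hs
      have hd := (hQode μ hμU s hs).sub (hQode μ0 hUμ s hs)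
      have hval : Aop d h N hN Δ A nn s μ (Q μ s) - Aop d h N hN Δ A nn s μ0 (Q μ0 s)
          = gOp d h N (cf μ0) (mS s) idx (Q μ s - Q μ0 s)
            + gOp d h N (cf μ - cf μ0) (mS s) idx (Q μ s) := by
        rw [hAop, hAop, gOp_sub_q, gOp_sub_c]
        abel
      rw [hval] at hd
      exact hd
    · -- initial value
      show Q μ 0 - Q μ0 0 = 0
      rw [hQ0 μ hμU, hQ0 μ0 hUμ]; simp
    · -- norm bound on derivative
      intro s hs
      set F := ‖Q μ s - Q μ0 s‖ with hF
      have hFnn : 0 ≤ F := norm_nonneg _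
      have hb1 : ‖gOp d h N (cf μ0) (mS s) idx (Q μ s - Q μ0 s)‖ ≤ K0f * F := by
        have := hgb (cf μ0) (Δ * M) (mul_nonneg hΔ.le hMnn)
          (hcc0 μ0 (Metric.mem_closedBall_self hρ.le)) s hs (Q μ s - Q μ0 s)
        calc ‖gOp d h N (cf μ0) (mS s) idx (Q μ s - Q μ0 s)‖
            ≤ (((h:ℝ)+1) * ((d:ℝ)*Cm) * (Δ * M)) * F := this
          _ = K0f * F := by rw [hK0fdef, hKbdef]
      have hb2 : ‖gOp d h N (cf μ - cf μ0) (mS s) idx (Q μ s)‖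
          ≤ (CL0 * ‖μ - μ0‖) * ‖Q μ s‖ := by
        have := hgb (cf μ - cf μ0) ((Δ * (Emax * M)) * ‖μ - μ0‖)
          (mul_nonneg (mul_nonneg hΔ.le (mul_nonneg hEnn hMnn)) htnn)
          (hccL μ hμ) s hs (Q μ s)
        calc ‖gOp d h N (cf μ - cf μ0) (mS s) idx (Q μ s)‖
            ≤ (((h:ℝ)+1) * ((d:ℝ)*Cm) * ((Δ * (Emax * M)) * ‖μ - μ0‖)) * ‖Q μ s‖ := this
          _ = (CL0 * ‖μ - μ0‖) * ‖Q μ s‖ := by rw [hCL0def, hKbdef]; ring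
      have hQb : ‖Q μ s‖ ≤ F + MQ := by
        calc ‖Q μ s‖ = ‖(Q μ s - Q μ0 s) + Q μ0 s‖ := by rw [sub_add_cancel]
          _ ≤ ‖Q μ s - Q μ0 s‖ + ‖Q μ0 s‖ := norm_add_le _ _
          _ ≤ F + MQ := by rw [hF]; exact add_le_add_right (hMQ s hs) _
      calc ‖gOp d h N (cf μ0) (mS s) idx (Q μ s - Q μ0 s)
            + gOp d h N (cf μ - cf μ0) (mS s) idx (Q μ s)‖
          ≤ ‖gOp d h N (cf μ0) (mS s) idx (Q μ s - Q μ0 s)‖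
            + ‖gOp d h N (cf μ - cf μ0) (mS s) idx (Q μ s)‖ := norm_add_le _ _
        _ ≤ K0f * F + (CL0 * ‖μ - μ0‖) * ‖Q μ s‖ := add_le_add hb1 hb2
        _ ≤ K0f * F + (CL0 * ‖μ - μ0‖) * (F + MQ) := by
            refine add_le_add_right (mul_le_mul_of_nonneg_left hQb ?_) _
            exact mul_nonneg hCL0nn htnn
        _ = (K0f + CL0 * ‖μ - μ0‖) * F + (CL0 * MQ) * ‖μ - μ0‖ := by ring
        _ ≤ KA * F + (CL0 * MQ) * ‖μ - μ0‖ := by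
            refine add_le_add_left (mul_le_mul_of_nonneg_right ?_ hFnn) _
            have : CL0 * ‖μ - μ0‖ ≤ CL0 * ρ := mul_le_mul_of_nonneg_left ht hCL0nn
            rw [hKAdef]; linarith
  -- Step B: second-order estimate
  set KB : ℝ := K0f + 1 with hKBdef
  have hKB : 0 < KB := by rw [hKBdef]; linarith
  set CB : ℝ := (CT0 * MQ + CL0 * CQ) * (Real.exp KB / KB) with hCBdef
  have hCBcore : 0 ≤ CT0 * MQ + CL0 * CQ := by
    have h1 : 0 ≤ CT0 * MQ := mul_nonneg hCT0nn hMQ0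
    have h2 : 0 ≤ CL0 * CQ := mul_nonneg hCL0nn hCQnn
    linarith
  have hStepB : ∀ μ ∈ Metric.closedBall μ0 ρ,
      ‖Q μ 1 - Q μ0 1 - (μ - μ0) • r 1‖ ≤ CB * (‖μ - μ0‖ * ‖μ - μ0‖) := by
    intro μ hμ
    have hμU : μ ∈ U := hBU hμ
    have ht : ‖μ - μ0‖ ≤ ρ := by rwa [Metric.mem_closedBall, dist_eq_norm] at hμ
    have htnn : 0 ≤ ‖μ - μ0‖ := norm_nonneg _
    have hG := gronwall_simple (fun s => Q μ s - Q μ0 s - (μ - μ0) • r s)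
      (fun s => gOp d h N (cf μ0) (mS s) idx (Q μ s - Q μ0 s - (μ - μ0) • r s)
        + (gOp d h N (cf μ - cf μ0 - (μ - μ0) • cD) (mS s) idx (Q μ0 s)
          + gOp d h N (cf μ - cf μ0) (mS s) idx (Q μ s - Q μ0 s)))
      KB ((CT0 * MQ + CL0 * CQ) * (‖μ - μ0‖ * ‖μ - μ0‖)) hKB
      (mul_nonneg hCBcore (by positivity))
      ?_ ?_ ?_
    · have h1 := hG 1 (Set.right_mem_Icc.2 zero_le_one)
      refine h1.trans ?_
      calc (CT0 * MQ + CL0 * CQ) * (‖μ - μ0‖ * ‖μ - μ0‖) * (Real.exp KB / KB)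
          = CB * (‖μ - μ0‖ * ‖μ - μ0‖) := by rw [hCBdef]; ring
        _ ≤ CB * (‖μ - μ0‖ * ‖μ - μ0‖) := le_rfl
    · -- derivative
      intro s hs
      have hd := ((hQode μ hμU s hs).sub (hQode μ0 hUμ s hs)).sub
        ((hrode s hs).const_smul (μ - μ0))
      have hr' : (fun n i => AopDmu d h N hN Δ A nn s μ0 (Q μ0 s) n i
            + Aop d h N hN Δ A nn s μ0 (r s) n i)
          = gOp d h N cD (mS s) idx (Q μ0 s) + gOp d h N (cf μ0) (mS s) idx (r s) := by
        funext n i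
        simp only [hAopD, hAop, Pi.add_apply]
      have hval : Aop d h N hN Δ A nn s μ (Q μ s) - Aop d h N hN Δ A nn s μ0 (Q μ0 s)
            - (μ - μ0) • (gOp d h N cD (mS s) idx (Q μ0 s)
              + gOp d h N (cf μ0) (mS s) idx (r s))
          = gOp d h N (cf μ0) (mS s) idx (Q μ s - Q μ0 s - (μ - μ0) • r s)
            + (gOp d h N (cf μ - cf μ0 - (μ - μ0) • cD) (mS s) idx (Q μ0 s)
              + gOp d h N (cf μ - cf μ0) (mS s) idx (Q μ s - Q μ0 s)) := by
        rw [hAop, hAop]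
        simp only [gOp_sub_q, gOp_sub_c, gOp_smul_q, gOp_smul_c, smul_add, smul_sub]
        abel
      rw [hr', hval] at hd
      exact hd
    · -- initial value
      show Q μ 0 - Q μ0 0 - (μ - μ0) • r 0 = 0
      rw [hQ0 μ hμU, hQ0 μ0 hUμ, hr0]; simp
    · -- norm bound
      intro s hs
      set W := ‖Q μ s - Q μ0 s - (μ - μ0) • r s‖ with hW
      have hWnn : 0 ≤ W := norm_nonneg _
      have hb1 : ‖gOp d h N (cf μ0) (mS s) idx (Q μ s - Q μ0 s - (μ - μ0) • r s)‖
          ≤ K0f * W := by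
        have := hgb (cf μ0) (Δ * M) (mul_nonneg hΔ.le hMnn)
          (hcc0 μ0 (Metric.mem_closedBall_self hρ.le)) s hs (Q μ s - Q μ0 s - (μ - μ0) • r s)
        calc ‖gOp d h N (cf μ0) (mS s) idx (Q μ s - Q μ0 s - (μ - μ0) • r s)‖
            ≤ (((h:ℝ)+1) * ((d:ℝ)*Cm) * (Δ * M)) * W := this
          _ = K0f * W := by rw [hK0fdef, hKbdef]
      have hb2 : ‖gOp d h N (cf μ - cf μ0 - (μ - μ0) • cD) (mS s) idx (Q μ0 s)‖
          ≤ (CT0 * (‖μ - μ0‖ * ‖μ - μ0‖)) * MQ := by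
        have H := hgb (cf μ - cf μ0 - (μ - μ0) • cD)
          ((Δ * (Emax * ((Emax+1) * M))) * (‖μ - μ0‖ * ‖μ - μ0‖))
          (mul_nonneg (mul_nonneg hΔ.le (mul_nonneg hEnn
            (mul_nonneg (by linarith) hMnn))) (by positivity))
          (hccT μ hμ) s hs (Q μ0 s)
        have hQb := hMQ s hs
        calc ‖gOp d h N (cf μ - cf μ0 - (μ - μ0) • cD) (mS s) idx (Q μ0 s)‖
            ≤ (((h:ℝ)+1) * ((d:ℝ)*Cm) * ((Δ * (Emax * ((Emax+1) * M)))
                * (‖μ - μ0‖ * ‖μ - μ0‖))) * ‖Q μ0 s‖ := H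
          _ ≤ (((h:ℝ)+1) * ((d:ℝ)*Cm) * ((Δ * (Emax * ((Emax+1) * M)))
                * (‖μ - μ0‖ * ‖μ - μ0‖))) * MQ := by
              refine mul_le_mul_of_nonneg_left hQb ?_
              rw [← hKbdef]
              exact mul_nonneg hKbnn (mul_nonneg (mul_nonneg hΔ.le (mul_nonneg hEnn
                (mul_nonneg (by linarith) hMnn))) (by positivity))
          _ = (CT0 * (‖μ - μ0‖ * ‖μ - μ0‖)) * MQ := by rw [hCT0def, hKbdef]; ring
      have hb3 : ‖gOp d h N (cf μ - cf μ0) (mS s) idx (Q μ s - Q μ0 s)‖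
          ≤ (CL0 * ‖μ - μ0‖) * (CQ * ‖μ - μ0‖) := by
        have H := hgb (cf μ - cf μ0) ((Δ * (Emax * M)) * ‖μ - μ0‖)
          (mul_nonneg (mul_nonneg hΔ.le (mul_nonneg hEnn hMnn)) htnn)
          (hccL μ hμ) s hs (Q μ s - Q μ0 s)
        have hSA := hStepA μ hμ s hs
        calc ‖gOp d h N (cf μ - cf μ0) (mS s) idx (Q μ s - Q μ0 s)‖
            ≤ (((h:ℝ)+1) * ((d:ℝ)*Cm) * ((Δ * (Emax * M)) * ‖μ - μ0‖))
                * ‖Q μ s - Q μ0 s‖ := H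
          _ ≤ (((h:ℝ)+1) * ((d:ℝ)*Cm) * ((Δ * (Emax * M)) * ‖μ - μ0‖))
                * (CQ * ‖μ - μ0‖) := by
              refine mul_le_mul_of_nonneg_left hSA ?_
              rw [← hKbdef]
              exact mul_nonneg hKbnn (mul_nonneg (mul_nonneg hΔ.le
                (mul_nonneg hEnn hMnn)) htnn)
          _ = (CL0 * ‖μ - μ0‖) * (CQ * ‖μ - μ0‖) := by rw [hCL0def, hKbdef]; ring
      calc ‖gOp d h N (cf μ0) (mS s) idx (Q μ s - Q μ0 s - (μ - μ0) • r s)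
            + (gOp d h N (cf μ - cf μ0 - (μ - μ0) • cD) (mS s) idx (Q μ0 s)
              + gOp d h N (cf μ - cf μ0) (mS s) idx (Q μ s - Q μ0 s))‖
          ≤ ‖gOp d h N (cf μ0) (mS s) idx (Q μ s - Q μ0 s - (μ - μ0) • r s)‖
            + (‖gOp d h N (cf μ - cf μ0 - (μ - μ0) • cD) (mS s) idx (Q μ0 s)‖
              + ‖gOp d h N (cf μ - cf μ0) (mS s) idx (Q μ s - Q μ0 s)‖) :=
            (norm_add_le _ _).trans (add_le_add_right (norm_add_le _ _) _)
        _ ≤ K0f * W + ((CT0 * (‖μ - μ0‖ * ‖μ - μ0‖)) * MQ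
              + (CL0 * ‖μ - μ0‖) * (CQ * ‖μ - μ0‖)) :=
            add_le_add hb1 (add_le_add hb2 hb3)
        _ = K0f * W + (CT0 * MQ + CL0 * CQ) * (‖μ - μ0‖ * ‖μ - μ0‖) := by ring
        _ ≤ KB * W + (CT0 * MQ + CL0 * CQ) * (‖μ - μ0‖ * ‖μ - μ0‖) := by
            refine add_le_add_left (mul_le_mul_of_nonneg_right ?_ hWnn) _
            rw [hKBdef]; linarith
  -- derivative of μ ↦ Q μ 1
  have hQd : HasDerivAt (fun μ => Q μ 1) (r 1) μ0 := by
    rw [hasDerivAt_iff_isLittleO]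
    have hbig : (fun μ' => Q μ' 1 - Q μ0 1 - (μ' - μ0) • r 1)
        =O[nhds μ0] (fun μ' => ‖μ' - μ0‖ * ‖μ' - μ0‖) := by
      rw [Asymptotics.isBigO_iff]
      refine ⟨CB, ?_⟩
      filter_upwards [Metric.closedBall_mem_nhds μ0 hρ] with μ hμ
      have hB := hStepB μ hμ
      rw [Real.norm_eq_abs, abs_of_nonneg (by positivity)]
      exact hB
    have hsmall : (fun μ' : ℂ => ‖μ' - μ0‖ * ‖μ' - μ0‖) =o[nhds μ0] fun μ' => μ' - μ0 := by
      rw [Asymptotics.isLittleO_iff]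
      intro c hc
      filter_upwards [Metric.closedBall_mem_nhds μ0 hc] with μ hμ
      have h1 : ‖μ - μ0‖ ≤ c := by rwa [Metric.mem_closedBall, dist_eq_norm] at hμ
      rw [Real.norm_eq_abs, abs_of_nonneg (by positivity)]
      exact mul_le_mul_of_nonneg_right h1 (norm_nonneg _)
    exact hbig.trans_isLittleO hsmall
  -- derivative of μ ↦ B(μ)v
  have hBd : HasDerivAt (fun μ => Bop d N hN μ v)
      (fun (n : Fin N) (i : Fin d) => if (n : ℕ) = N - 1 then v ⟨0, hN⟩ i else 0) μ0 := by
    rw [hasDerivAt_pi]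
    intro n
    rw [hasDerivAt_pi]
    intro i
    by_cases hn : (n : ℕ) + 1 < N
    · have hne : ¬((n : ℕ) = N - 1) := by omega
      simp only [Bop, dif_pos hn, hne, if_false]
      exact hasDerivAt_const _ _
    · have heq : (n : ℕ) = N - 1 := by have := n.isLt; omega
      simp only [Bop, dif_neg hn]
      rw [if_pos heq]
      exact hasDerivAt_mul_const _
  exact hQd.sub hBd
end
end

section
/- Let μ ∈ ℂ with μ ≠ 0 and let u, v ∈ (ℂ^d)^N. Let q : [0,1] → (ℂ^d)^N be differentiable with q'(s) = A(s, conj(μ)) q(s) for all s ∈ [0,1] and q(0) = u, and let p : [0,1] → (ℂ^d)^N be differentiable with p'(s) = −A(s, μ)ᵀ p(s) for all s ∈ [0,1] and p(1) = v, where ᵀ denotes the transpose without conjugation. Then (q(1) − B(conj(μ))u)* v = u* (p(0) − B(μ)ᵀ v), where w* z denotes the conjugate-transpose pairing Σ_i conj(w_i) z_i. Equivalently, the transposed characteristic matrix satisfies M(μ) = N(conj(μ))*. (The key identity in the proof of Theorem 4.1.) -/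
open scoped BigOperators

noncomputable section

/-- The transpose (without conjugation) `A(s,μ)ᵀ` of the block map `A(s,μ)`,
acting on `p ∈ (ℂ^d)^N`. -/
def AopT (d h N : ℕ) (hN : 0 < N) (Δ : ℝ)
    (A : Fin (h+1) → ℝ → Matrix (Fin d) (Fin d) ℝ) (nn : Fin (h+1) → ℕ)
    (s : ℝ) (μ : ℂ) (p : Fin N → Fin d → ℂ) : Fin N → Fin d → ℂ :=
  fun n i => (Δ : ℂ) * ∑ m : Fin N, ∑ j : Fin (h+1),
    if n = bIdx N hN (((m : ℕ) : ℤ) + 1 - (nn j : ℤ)) then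
      μ ^ aExp N (((m : ℕ) : ℤ) + 1 - (nn j : ℤ)) *
        ∑ i' : Fin d, ((A j ((s + ((m : ℕ) : ℝ)) * Δ)) i' i : ℂ) * p m i'
    else 0

/-- The transpose `B(μ)ᵀ` of `B(μ)`:
`(B(μ)ᵀ v)_1 = μ v_N` and `(B(μ)ᵀ v)_n = v_{n-1}` for `n = 2,…,N`. -/
def BopT (d N : ℕ) (hN : 0 < N) (μ : ℂ) (v : Fin N → Fin d → ℂ) : Fin N → Fin d → ℂ :=
  fun n i => if hn : 0 < (n : ℕ) then
      v ⟨(n : ℕ) - 1, by have := n.isLt; omega⟩ i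
    else μ * v ⟨N - 1, by omega⟩ i

open Finset in
private lemma sum_swap4 {α₁ α₂ α₃ α₄ : Type*} [Fintype α₁] [Fintype α₂] [Fintype α₃] [Fintype α₄]
    (g : α₁ → α₂ → α₃ → α₄ → ℂ) :
    ∑ a : α₁, ∑ b : α₂, ∑ c : α₃, ∑ e : α₄, g a b c e
      = ∑ e : α₄, ∑ a : α₁, ∑ c : α₃, ∑ b : α₂, g a b c e := by
  calc ∑ a : α₁, ∑ b : α₂, ∑ c : α₃, ∑ e : α₄, g a b c e
      = ∑ a : α₁, ∑ b : α₂, ∑ e : α₄, ∑ c : α₃, g a b c e :=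
        Finset.sum_congr rfl fun a _ => Finset.sum_congr rfl fun b _ => Finset.sum_comm
    _ = ∑ a : α₁, ∑ e : α₄, ∑ b : α₂, ∑ c : α₃, g a b c e :=
        Finset.sum_congr rfl fun a _ => Finset.sum_comm
    _ = ∑ e : α₄, ∑ a : α₁, ∑ b : α₂, ∑ c : α₃, g a b c e := Finset.sum_comm
    _ = ∑ e : α₄, ∑ a : α₁, ∑ c : α₃, ∑ b : α₂, g a b c e :=
        Finset.sum_congr rfl fun e _ => Finset.sum_congr rfl fun a _ => Finset.sum_comm

open Finset in
private lemma sum_pair_aux {N h' d : ℕ} (Δ : ℝ)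
    (co : Fin N → Fin h' → ℂ) (b : Fin N → Fin h' → Fin N)
    (M : Fin N → Fin h' → Fin d → Fin d → ℝ) (Q P : Fin N → Fin d → ℂ) :
    (∑ n : Fin N, ∑ i : Fin d,
      (starRingEnd ℂ) ((Δ:ℂ) * ∑ j : Fin h', (starRingEnd ℂ) (co n j) *
        ∑ i' : Fin d, ((M n j i i' : ℝ) : ℂ) * Q (b n j) i') * P n i)
    = ∑ n : Fin N, ∑ i : Fin d, (starRingEnd ℂ) (Q n i) *
        ((Δ:ℂ) * ∑ m : Fin N, ∑ j : Fin h', if n = b m j then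
            co m j * ∑ i' : Fin d, ((M m j i' i : ℝ) : ℂ) * P m i' else 0) := by
  have hL : (∑ n : Fin N, ∑ i : Fin d,
      (starRingEnd ℂ) ((Δ:ℂ) * ∑ j : Fin h', (starRingEnd ℂ) (co n j) *
        ∑ i' : Fin d, ((M n j i i' : ℝ) : ℂ) * Q (b n j) i') * P n i)
      = ∑ n : Fin N, ∑ i : Fin d, ∑ j : Fin h', ∑ i' : Fin d,
          (Δ:ℂ) * co n j * ((M n j i i' : ℝ) : ℂ) * (starRingEnd ℂ) (Q (b n j) i') * P n i := by
    refine Finset.sum_congr rfl fun n _ => Finset.sum_congr rfl fun i _ => ?_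
    simp only [map_mul, map_sum, Complex.conj_ofReal, Complex.conj_conj,
      Finset.sum_mul, Finset.mul_sum]
    exact Finset.sum_congr rfl fun j _ => Finset.sum_congr rfl fun i' _ => by ring
  have step : ∀ (n : Fin N) (i : Fin d),
      (starRingEnd ℂ) (Q n i) *
        ((Δ:ℂ) * ∑ m : Fin N, ∑ j : Fin h', if n = b m j then
            co m j * ∑ i' : Fin d, ((M m j i' i : ℝ) : ℂ) * P m i' else 0)
      = ∑ m : Fin N, ∑ j : Fin h', if n = b m j then
          (∑ i' : Fin d, (Δ:ℂ) * co m j * ((M m j i' i : ℝ) : ℂ) *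
            (starRingEnd ℂ) (Q n i) * P m i') else 0 := by
    intro n i
    simp only [Finset.mul_sum, mul_ite, mul_zero]
    refine Finset.sum_congr rfl fun m _ => Finset.sum_congr rfl fun j _ => ?_
    split
    · exact Finset.sum_congr rfl fun i' _ => by ring
    · rfl
  have hR : (∑ n : Fin N, ∑ i : Fin d, (starRingEnd ℂ) (Q n i) *
        ((Δ:ℂ) * ∑ m : Fin N, ∑ j : Fin h', if n = b m j then
            co m j * ∑ i' : Fin d, ((M m j i' i : ℝ) : ℂ) * P m i' else 0))
      = ∑ i : Fin d, ∑ m : Fin N, ∑ j : Fin h', ∑ i' : Fin d,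
          (Δ:ℂ) * co m j * ((M m j i' i : ℝ) : ℂ) * (starRingEnd ℂ) (Q (b m j) i) * P m i' := by
    calc (∑ n : Fin N, ∑ i : Fin d, (starRingEnd ℂ) (Q n i) *
        ((Δ:ℂ) * ∑ m : Fin N, ∑ j : Fin h', if n = b m j then
            co m j * ∑ i' : Fin d, ((M m j i' i : ℝ) : ℂ) * P m i' else 0))
        = ∑ n : Fin N, ∑ i : Fin d, ∑ m : Fin N, ∑ j : Fin h', if n = b m j then
            (∑ i' : Fin d, (Δ:ℂ) * co m j * ((M m j i' i : ℝ) : ℂ) *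
              (starRingEnd ℂ) (Q n i) * P m i') else 0 :=
          Finset.sum_congr rfl fun n _ => Finset.sum_congr rfl fun i _ => step n i
      _ = ∑ i : Fin d, ∑ n : Fin N, ∑ m : Fin N, ∑ j : Fin h', if n = b m j then
            (∑ i' : Fin d, (Δ:ℂ) * co m j * ((M m j i' i : ℝ) : ℂ) *
              (starRingEnd ℂ) (Q n i) * P m i') else 0 := Finset.sum_comm
      _ = ∑ i : Fin d, ∑ m : Fin N, ∑ n : Fin N, ∑ j : Fin h', if n = b m j then
            (∑ i' : Fin d, (Δ:ℂ) * co m j * ((M m j i' i : ℝ) : ℂ) *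
              (starRingEnd ℂ) (Q n i) * P m i') else 0 :=
          Finset.sum_congr rfl fun i _ => Finset.sum_comm
      _ = ∑ i : Fin d, ∑ m : Fin N, ∑ j : Fin h', ∑ n : Fin N, if n = b m j then
            (∑ i' : Fin d, (Δ:ℂ) * co m j * ((M m j i' i : ℝ) : ℂ) *
              (starRingEnd ℂ) (Q n i) * P m i') else 0 :=
          Finset.sum_congr rfl fun i _ => Finset.sum_congr rfl fun m _ => Finset.sum_comm
      _ = ∑ i : Fin d, ∑ m : Fin N, ∑ j : Fin h', ∑ i' : Fin d,
            (Δ:ℂ) * co m j * ((M m j i' i : ℝ) : ℂ) *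
              (starRingEnd ℂ) (Q (b m j) i) * P m i' := by
          refine Finset.sum_congr rfl fun i _ => Finset.sum_congr rfl fun m _ =>
            Finset.sum_congr rfl fun j _ => ?_
          simp [Finset.sum_ite_eq']
  rw [hL, hR]
  exact sum_swap4 (fun n i j i' =>
    (Δ:ℂ) * co n j * ((M n j i i' : ℝ) : ℂ) * (starRingEnd ℂ) (Q (b n j) i') * P n i)

/-- The cyclic shift `n ↦ n+1 (mod N)` on `Fin N`. -/
private def rotE (N : ℕ) (hN : 0 < N) : Fin N ≃ Fin N where
  toFun n := if hn : (n:ℕ)+1 < N then ⟨(n:ℕ)+1, hn⟩ else ⟨0, hN⟩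
  invFun n := if hn : 0 < (n:ℕ) then ⟨(n:ℕ)-1, by have := n.isLt; omega⟩
              else ⟨N-1, by omega⟩
  left_inv n := by
    by_cases hn : (n:ℕ)+1 < N
    · simp only [dif_pos hn, Fin.val_mk]
      rw [dif_pos (show 0 < (n:ℕ)+1 by omega)]
      exact Fin.ext (show (n:ℕ)+1-1 = (n:ℕ) by omega)
    · simp only [dif_neg hn, Fin.val_mk]
      rw [dif_neg (show ¬ (0:ℕ) < 0 by omega)]
      exact Fin.ext (show N-1 = (n:ℕ) by have := n.isLt; omega)
  right_inv n := by
    by_cases hn : 0 < (n:ℕ)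
    · simp only [dif_pos hn, Fin.val_mk]
      rw [dif_pos (show (n:ℕ)-1+1 < N by have := n.isLt; omega)]
      exact Fin.ext (show (n:ℕ)-1+1 = (n:ℕ) by omega)
    · simp only [dif_neg hn, Fin.val_mk]
      rw [dif_neg (show ¬ (N-1+1 < N) by omega)]
      exact Fin.ext (show (0:ℕ) = (n:ℕ) by omega)

open Finset in
private lemma Bpair_aux (d N : ℕ) (hN : 0 < N) (μ : ℂ) (u w : Fin N → Fin d → ℂ) :
    (∑ n : Fin N, ∑ i : Fin d,
        (starRingEnd ℂ) (Bop d N hN ((starRingEnd ℂ) μ) u n i) * w n i)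
    = ∑ n : Fin N, ∑ i : Fin d, (starRingEnd ℂ) (u n i) * BopT d N hN μ w n i := by
  refine Fintype.sum_equiv (rotE N hN) _ _
    (fun n => Finset.sum_congr rfl fun i _ => ?_)
  by_cases hn : (n:ℕ)+1 < N
  · rw [show (rotE N hN) n = (⟨(n:ℕ)+1, hn⟩ : Fin N) from dif_pos hn,
      show Bop d N hN ((starRingEnd ℂ) μ) u n i = u ⟨(n:ℕ)+1, hn⟩ i from dif_pos hn,
      show BopT d N hN μ w (⟨(n:ℕ)+1, hn⟩ : Fin N) i
          = w ⟨(n:ℕ)+1-1, by omega⟩ i from dif_pos (show 0 < (n:ℕ)+1 by omega)]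
    congr 2
  · have hlt := n.isLt
    rw [show (rotE N hN) n = (⟨0, hN⟩ : Fin N) from dif_neg hn,
      show Bop d N hN ((starRingEnd ℂ) μ) u n i
          = (starRingEnd ℂ) μ * u ⟨0, hN⟩ i from dif_neg hn,
      show BopT d N hN μ w (⟨0, hN⟩ : Fin N) i
          = μ * w ⟨N-1, by omega⟩ i from dif_neg (show ¬ (0:ℕ) < 0 by omega)]
    have hw : w n i = w (⟨N-1, by omega⟩ : Fin N) i :=
      congrArg (fun m => w m i) (Fin.ext (show (n:ℕ) = N-1 by omega))
    rw [hw]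
    simp only [map_mul, Complex.conj_conj]
    ring

open Finset in
private lemma Aop_pair (d h N : ℕ) (hN : 0 < N) (Δ : ℝ)
    (A : Fin (h+1) → ℝ → Matrix (Fin d) (Fin d) ℝ) (nn : Fin (h+1) → ℕ)
    (s : ℝ) (μ : ℂ) (Q P : Fin N → Fin d → ℂ) :
    (∑ n : Fin N, ∑ i : Fin d,
      (starRingEnd ℂ) (Aop d h N hN Δ A nn s ((starRingEnd ℂ) μ) Q n i) * P n i)
    = ∑ n : Fin N, ∑ i : Fin d,
        (starRingEnd ℂ) (Q n i) * AopT d h N hN Δ A nn s μ P n i := by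
  have key := sum_pair_aux (N := N) (h' := h+1) (d := d) Δ
    (fun n j => μ ^ aExp N (((n : ℕ) : ℤ) + 1 - (nn j : ℤ)))
    (fun n j => bIdx N hN (((n : ℕ) : ℤ) + 1 - (nn j : ℤ)))
    (fun n j i i' => (A j ((s + ((n : ℕ) : ℝ)) * Δ)) i i') Q P
  simp only [Aop, AopT]
  simp only [map_zpow₀] at key
  exact key

/-- **Key identity in the proof of Theorem 4.1.** With `q' = A(s, conj μ) q`, `q(0) = u`
and `p' = -A(s,μ)ᵀ p`, `p(1) = v` on `[0,1]`, one has
`(q(1) - B(conj μ)u)* v = u* (p(0) - B(μ)ᵀ v)`, i.e. `M(μ) = N(conj μ)*`. -/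
theorem transposed_charmatrix_identity
    (d h N : ℕ) (hd : 0 < d) (hN : 0 < N) (Δ : ℝ) (hΔ : 0 < Δ)
    (A : Fin (h+1) → ℝ → Matrix (Fin d) (Fin d) ℝ)
    (hA : ∀ j, Continuous (A j))
    (hper : ∀ j t, A j (t + (N : ℝ) * Δ) = A j t)
    (nn : Fin (h+1) → ℕ) (hn0 : nn 0 = 0)
    (hmono : ∀ i j : Fin (h+1), 1 ≤ (i : ℕ) → i < j → nn i < nn j)
    (μ : ℂ) (hμ : μ ≠ 0)
    (u v : Fin N → Fin d → ℂ)
    (q p : ℝ → Fin N → Fin d → ℂ)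
    (hq0 : q 0 = u)
    (hqode : ∀ s ∈ Set.Icc (0:ℝ) 1,
      HasDerivAt q (Aop d h N hN Δ A nn s (starRingEnd ℂ μ) (q s)) s)
    (hp1 : p 1 = v)
    (hpode : ∀ s ∈ Set.Icc (0:ℝ) 1,
      HasDerivAt p (fun n i => -(AopT d h N hN Δ A nn s μ (p s) n i)) s) :
    (∑ n : Fin N, ∑ i : Fin d,
        (starRingEnd ℂ) (q 1 n i - Bop d N hN (starRingEnd ℂ μ) u n i) * v n i) =
    (∑ n : Fin N, ∑ i : Fin d,
        (starRingEnd ℂ) (u n i) * (p 0 n i - BopT d N hN μ v n i)) := by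
    classical
  -- pairing identity between `A(s, conj μ)` and `A(s, μ)ᵀ`
  have hpair : ∀ (s : ℝ) (Q P : Fin N → Fin d → ℂ),
      (∑ n : Fin N, ∑ i : Fin d,
        (starRingEnd ℂ) (Aop d h N hN Δ A nn s ((starRingEnd ℂ) μ) Q n i) * P n i)
      = ∑ n : Fin N, ∑ i : Fin d,
          (starRingEnd ℂ) (Q n i) * AopT d h N hN Δ A nn s μ P n i :=
    fun s Q P => Aop_pair d h N hN Δ A nn s μ Q P
  -- the pairing `F s = q(s)* p(s)` has zero derivative on `[0,1]`
  have hF : ∀ s ∈ Set.Icc (0:ℝ) 1,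
      HasDerivAt (fun t => ∑ n : Fin N, ∑ i : Fin d,
        (starRingEnd ℂ) (q t n i) * p t n i) 0 s := by
    intro s hs
    have hq' : ∀ (n : Fin N) (i : Fin d), HasDerivAt (fun t => q t n i)
        (Aop d h N hN Δ A nn s ((starRingEnd ℂ) μ) (q s) n i) s :=
      fun n i => hasDerivAt_pi.mp (hasDerivAt_pi.mp (hqode s hs) n) i
    have hp' : ∀ (n : Fin N) (i : Fin d), HasDerivAt (fun t => p t n i)
        (-(AopT d h N hN Δ A nn s μ (p s) n i)) s :=
      fun n i => hasDerivAt_pi.mp (hasDerivAt_pi.mp (hpode s hs) n) i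
    have hder : HasDerivAt (fun t => ∑ n : Fin N, ∑ i : Fin d,
        (starRingEnd ℂ) (q t n i) * p t n i)
        (∑ n : Fin N, ∑ i : Fin d,
          ((starRingEnd ℂ) (Aop d h N hN Δ A nn s ((starRingEnd ℂ) μ) (q s) n i) * p s n i
            + (starRingEnd ℂ) (q s n i) * (-(AopT d h N hN Δ A nn s μ (p s) n i)))) s := by
      refine HasDerivAt.fun_sum fun n _ => HasDerivAt.fun_sum fun i _ => ?_
      exact ((hq' n i).star).mul (hp' n i)
    have h0 : (∑ n : Fin N, ∑ i : Fin d,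
        ((starRingEnd ℂ) (Aop d h N hN Δ A nn s ((starRingEnd ℂ) μ) (q s) n i) * p s n i
          + (starRingEnd ℂ) (q s n i) * (-(AopT d h N hN Δ A nn s μ (p s) n i)))) = 0 := by
      simp only [mul_neg, ← sub_eq_add_neg, Finset.sum_sub_distrib]
      rw [hpair s (q s) (p s), sub_self]
    exact h0 ▸ hder
  -- hence the pairing is constant on `[0,1]`
  have hF10 :
      (∑ n : Fin N, ∑ i : Fin d, (starRingEnd ℂ) (q 1 n i) * p 1 n i)
      = ∑ n : Fin N, ∑ i : Fin d, (starRingEnd ℂ) (q 0 n i) * p 0 n i :=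
    constant_of_has_deriv_right_zero
      (fun s hs => (hF s hs).continuousAt.continuousWithinAt)
      (fun x hx => (hF x (Set.Ico_subset_Icc_self hx)).hasDerivWithinAt)
      1 (Set.right_mem_Icc.mpr zero_le_one)
  have h1 : (∑ n : Fin N, ∑ i : Fin d, (starRingEnd ℂ) (q 1 n i) * v n i)
      = ∑ n : Fin N, ∑ i : Fin d, (starRingEnd ℂ) (u n i) * p 0 n i := by
    rw [← hp1, hF10, hq0]
  calc (∑ n : Fin N, ∑ i : Fin d,
        (starRingEnd ℂ) (q 1 n i - Bop d N hN (starRingEnd ℂ μ) u n i) * v n i)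
      = (∑ n : Fin N, ∑ i : Fin d, (starRingEnd ℂ) (q 1 n i) * v n i)
        - ∑ n : Fin N, ∑ i : Fin d,
            (starRingEnd ℂ) (Bop d N hN (starRingEnd ℂ μ) u n i) * v n i := by
        simp only [map_sub, sub_mul, Finset.sum_sub_distrib]
    _ = (∑ n : Fin N, ∑ i : Fin d, (starRingEnd ℂ) (u n i) * p 0 n i)
        - ∑ n : Fin N, ∑ i : Fin d, (starRingEnd ℂ) (u n i) * BopT d N hN μ v n i := by
        rw [h1, Bpair_aux d N hN μ u v]
    _ = ∑ n : Fin N, ∑ i : Fin d,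
          (starRingEnd ℂ) (u n i) * (p 0 n i - BopT d N hN μ v n i) := by
        simp only [mul_sub, Finset.sum_sub_distrib]
end
end
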